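/- arXiv:1512.00663 — 2 statements merged into one kernel-verified Lean document; each statement's English description precedes it below -/
import Mathlib

section
/- Let n ≥ 1, α ∈ ℝ, and let f : ℝⁿ → ℝ be locally integrable with finite Campanato norm ‖f‖_{E^{α,1}}. Let B = B(x₀,r) be a ball, x ∈ B, and t > 8r. Then ∫_{{y : 8r ≤ |x−y| < t}} |f(y) − f_B| / |x−y|^{n−1} dy is at most c t r^α ‖f‖_{E^{α,1}} if α < 0, at most c t log(t/r) ‖f‖_{E^{α,1}} if α = 0, and at most c t^{1+α} ‖f‖_{E^{α,1}} if α > 0, with c depending only on n and α. -/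
open MeasureTheory Metric ENNReal

noncomputable def ballAvg (n : ℕ) (f : EuclideanSpace ℝ (Fin n) → ℝ)
    (c : EuclideanSpace ℝ (Fin n)) (r : ℝ) : ℝ :=
  (volume (closedBall c r)).toReal⁻¹ * ∫ y in closedBall c r, f y

noncomputable def bmoNorm (n : ℕ) (f : EuclideanSpace ℝ (Fin n) → ℝ) : ℝ≥0∞ :=
  ⨆ (c : EuclideanSpace ℝ (Fin n)) (r : ℝ) (_ : 0 < r),
    ENNReal.ofReal ((volume (closedBall c r)).toReal⁻¹ *
      ∫ y in closedBall c r, |f y - ballAvg n f c r|)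

noncomputable def campanatoNorm (n : ℕ) (α p : ℝ) (f : EuclideanSpace ℝ (Fin n) → ℝ) : ℝ≥0∞ :=
  ⨆ (c : EuclideanSpace ℝ (Fin n)) (r : ℝ) (_ : 0 < r),
    ENNReal.ofReal ((volume (closedBall c r)).toReal ^ (-(α / n)) *
      ((volume (closedBall c r)).toReal⁻¹ *
        ∫ y in closedBall c r, |f y - ballAvg n f c r| ^ p) ^ (1 / p))

noncomputable def campanato1Norm (n : ℕ) (α : ℝ) (f : EuclideanSpace ℝ (Fin n) → ℝ) : ℝ≥0∞ :=
  ⨆ (c : EuclideanSpace ℝ (Fin n)) (r : ℝ) (_ : 0 < r),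
    ENNReal.ofReal ((volume (closedBall c r)).toReal ^ (-(α / n)) *
      ((volume (closedBall c r)).toReal⁻¹ *
        ∫ y in closedBall c r, |f y - ballAvg n f c r|))

noncomputable def lipNorm (n : ℕ) (γ : ℝ) (f : EuclideanSpace ℝ (Fin n) → ℝ) : ℝ≥0∞ :=
  ⨆ (x : EuclideanSpace ℝ (Fin n)) (y : EuclideanSpace ℝ (Fin n)) (_ : x ≠ y),
    ENNReal.ofReal (|f x - f y| / ‖x - y‖ ^ γ)

noncomputable def ωn (n : ℕ) : ℝ := (volume (ball (0 : EuclideanSpace ℝ (Fin n)) 1)).toReal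

lemma ωn_pos (n : ℕ) : 0 < ωn n := by
  have := measure_ball_pos (volume) (0 : EuclideanSpace ℝ (Fin n)) one_pos
  have h2 : volume (ball (0 : EuclideanSpace ℝ (Fin n)) 1) < ⊤ := measure_ball_lt_top
  exact ENNReal.toReal_pos this.ne' h2.ne

lemma vol_toReal (n : ℕ) (c : EuclideanSpace ℝ (Fin n)) {ρ : ℝ} (hρ : 0 ≤ ρ) :
    (volume (closedBall c ρ)).toReal = ρ ^ n * ωn n := by
  rw [Measure.addHaar_closedBall volume c hρ]
  rw [ENNReal.toReal_mul, ENNReal.toReal_ofReal (by positivity), finrank_euclideanSpace_fin]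
  rfl

lemma vol_pos (n : ℕ) (c : EuclideanSpace ℝ (Fin n)) {ρ : ℝ} (hρ : 0 < ρ) :
    0 < (volume (closedBall c ρ)).toReal := by
  rw [vol_toReal n c hρ.le]; have := ωn_pos n; positivity

/-- Basic Campanato estimate on the integral of the deviation. -/
lemma camp_int_le {n : ℕ} {α : ℝ} {f : EuclideanSpace ℝ (Fin n) → ℝ}
    (hf : campanato1Norm n α f < ⊤) (c : EuclideanSpace ℝ (Fin n)) {ρ : ℝ} (hρ : 0 < ρ) :
    ∫ y in closedBall c ρ, |f y - ballAvg n f c ρ| ≤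
      (volume (closedBall c ρ)).toReal ^ (α / (n:ℝ)) * (volume (closedBall c ρ)).toReal *
        (campanato1Norm n α f).toReal := by
  set V := (volume (closedBall c ρ)).toReal with hV
  have hVpos : 0 < V := vol_pos n c hρ
  set I := ∫ y in closedBall c ρ, |f y - ballAvg n f c ρ| with hI
  have hInn : 0 ≤ I := integral_nonneg fun y => abs_nonneg _
  have hle : ENNReal.ofReal (V ^ (-(α / (n:ℝ))) * (V⁻¹ * I)) ≤ campanato1Norm n α f := by
    apply le_iSup_of_le c; apply le_iSup_of_le ρ; exact le_iSup_of_le hρ le_rfl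
  have hle2 : V ^ (-(α / (n:ℝ))) * (V⁻¹ * I) ≤ (campanato1Norm n α f).toReal := by
    have := ENNReal.toReal_mono hf.ne hle
    rwa [ENNReal.toReal_ofReal (by positivity)] at this
  have key : I = V ^ (α / (n:ℝ)) * V * (V ^ (-(α / (n:ℝ))) * (V⁻¹ * I)) := by
    have h1 : V ^ (α / (n:ℝ)) * V ^ (-(α / (n:ℝ))) = 1 := by
      rw [← Real.rpow_add hVpos, add_neg_cancel, Real.rpow_zero]
    have h2 : V * V⁻¹ = 1 := mul_inv_cancel₀ hVpos.ne'
    calc I = (V ^ (α / (n:ℝ)) * V ^ (-(α / (n:ℝ)))) * (V * V⁻¹) * I := by rw [h1, h2]; ring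
      _ = V ^ (α / (n:ℝ)) * V * (V ^ (-(α / (n:ℝ))) * (V⁻¹ * I)) := by ring
  calc I = V ^ (α / (n:ℝ)) * V * (V ^ (-(α / (n:ℝ))) * (V⁻¹ * I)) := key
    _ ≤ V ^ (α / (n:ℝ)) * V * (campanato1Norm n α f).toReal := by
        apply mul_le_mul_of_nonneg_left hle2; positivity

lemma dev_integrableOn {n : ℕ} {f : EuclideanSpace ℝ (Fin n) → ℝ}
    (hf : LocallyIntegrable f volume) (c : EuclideanSpace ℝ (Fin n)) (ρ : ℝ) (a : ℝ) :
    IntegrableOn (fun y => |f y - a|) (closedBall c ρ) volume := by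
  have h1 : IntegrableOn f (closedBall c ρ) volume :=
    hf.integrableOn_isCompact (isCompact_closedBall c ρ)
  exact (h1.sub (integrableOn_const measure_closedBall_lt_top.ne)).abs

/-- Difference of averages over nested balls, with ρ₂ ≤ 2 ρ₁. -/
lemma avg_diff_le {n : ℕ} (hn : 1 ≤ n) {α : ℝ} {f : EuclideanSpace ℝ (Fin n) → ℝ}
    (hloc : LocallyIntegrable f volume) (hf : campanato1Norm n α f < ⊤)
    {c₁ c₂ : EuclideanSpace ℝ (Fin n)} {ρ₁ ρ₂ : ℝ} (h₁ : 0 < ρ₁) (h₂pos : 0 < ρ₂)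
    (h₂ : ρ₂ ≤ 2 * ρ₁) (hsub : closedBall c₁ ρ₁ ⊆ closedBall c₂ ρ₂) :
    |ballAvg n f c₁ ρ₁ - ballAvg n f c₂ ρ₂| ≤
      2 ^ n * ((ωn n) ^ (α / (n:ℝ)) * ρ₂ ^ α) * (campanato1Norm n α f).toReal := by
  set M := (campanato1Norm n α f).toReal with hM
  have hMnn : 0 ≤ M := ENNReal.toReal_nonneg
  set V₁ := (volume (closedBall c₁ ρ₁)).toReal with hV₁
  set V₂ := (volume (closedBall c₂ ρ₂)).toReal with hV₂
  have hV₁pos : 0 < V₁ := vol_pos n c₁ h₁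
  have hV₂pos : 0 < V₂ := vol_pos n c₂ h₂pos
  set a₂ := ballAvg n f c₂ ρ₂ with ha₂
  have hint₂ : IntegrableOn (fun y => |f y - a₂|) (closedBall c₂ ρ₂) volume :=
    dev_integrableOn hloc c₂ ρ₂ a₂
  have hint₁f : IntegrableOn f (closedBall c₁ ρ₁) volume :=
    hloc.integrableOn_isCompact (isCompact_closedBall c₁ ρ₁)
  -- step 1 : |a₁ - a₂| ≤ V₁⁻¹ * ∫_{B₁} |f - a₂|
  have step1 : |ballAvg n f c₁ ρ₁ - a₂| ≤ V₁⁻¹ * ∫ y in closedBall c₁ ρ₁, |f y - a₂| := by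
    have heq : ballAvg n f c₁ ρ₁ - a₂ = V₁⁻¹ * ∫ y in closedBall c₁ ρ₁, (f y - a₂) := by
      rw [integral_sub hint₁f (integrableOn_const measure_closedBall_lt_top.ne)]
      rw [setIntegral_const, smul_eq_mul, measureReal_def]
      rw [ballAvg, ← hV₁]
      field_simp
    rw [heq, abs_mul, abs_inv, abs_of_pos hV₁pos]
    gcongr
    calc |∫ y in closedBall c₁ ρ₁, (f y - a₂)|
        = ‖∫ y in closedBall c₁ ρ₁, (f y - a₂)‖ := (Real.norm_eq_abs _).symm
      _ ≤ ∫ y in closedBall c₁ ρ₁, ‖f y - a₂‖ := norm_integral_le_integral_norm _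
      _ = ∫ y in closedBall c₁ ρ₁, |f y - a₂| := by simp [Real.norm_eq_abs]
  -- step 2 : monotonicity of the integral in the set
  have step2 : ∫ y in closedBall c₁ ρ₁, |f y - a₂| ≤ ∫ y in closedBall c₂ ρ₂, |f y - a₂| :=
    setIntegral_mono_set hint₂ (Filter.Eventually.of_forall fun y => abs_nonneg _)
      (HasSubset.Subset.eventuallyLE hsub)
  -- step 3 : Campanato bound
  have step3 : ∫ y in closedBall c₂ ρ₂, |f y - a₂| ≤ V₂ ^ (α / (n:ℝ)) * V₂ * M :=
    camp_int_le hf c₂ h₂pos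
  have chain : |ballAvg n f c₁ ρ₁ - a₂| ≤ V₁⁻¹ * (V₂ ^ (α / (n:ℝ)) * V₂ * M) := by
    calc |ballAvg n f c₁ ρ₁ - a₂| ≤ V₁⁻¹ * ∫ y in closedBall c₁ ρ₁, |f y - a₂| := step1
      _ ≤ V₁⁻¹ * (V₂ ^ (α / (n:ℝ)) * V₂ * M) := by
          apply mul_le_mul_of_nonneg_left _ (by positivity)
          exact le_trans step2 step3
  refine chain.trans ?_
  -- now pure computation
  have hωpos := ωn_pos n
  have hVr : V₂ ^ (α / (n:ℝ)) = ρ₂ ^ α * (ωn n) ^ (α / (n:ℝ)) := by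
    rw [hV₂, vol_toReal n c₂ h₂pos.le, Real.mul_rpow (by positivity) (by positivity)]
    congr 1
    rw [← Real.rpow_natCast ρ₂ n, ← Real.rpow_mul h₂pos.le]
    congr 1
    field_simp
  have hV1r : V₁ = ρ₁ ^ n * ωn n := vol_toReal n c₁ h₁.le
  have hV2r : V₂ = ρ₂ ^ n * ωn n := vol_toReal n c₂ h₂pos.le
  have hratio : V₁⁻¹ * V₂ ≤ 2 ^ n := by
    rw [hV1r, hV2r]
    rw [mul_inv]
    have : (ρ₁ ^ n)⁻¹ * (ωn n)⁻¹ * (ρ₂ ^ n * ωn n) = (ρ₂ / ρ₁) ^ n := by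
      field_simp
      rw [← mul_pow, mul_div_cancel₀ _ h₁.ne']
    rw [this]
    apply pow_le_pow_left₀ (by positivity)
    rw [div_le_iff₀ h₁]
    linarith
  calc V₁⁻¹ * (V₂ ^ (α / (n:ℝ)) * V₂ * M)
      = (V₁⁻¹ * V₂) * (V₂ ^ (α / (n:ℝ)) * M) := by ring
    _ ≤ 2 ^ n * (V₂ ^ (α / (n:ℝ)) * M) := by
        apply mul_le_mul_of_nonneg_right hratio (by positivity)
    _ = 2 ^ n * ((ωn n) ^ (α / (n:ℝ)) * ρ₂ ^ α) * M := by rw [hVr]; ring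

lemma chain_bound {n : ℕ} (hn : 1 ≤ n) {α : ℝ} {f : EuclideanSpace ℝ (Fin n) → ℝ}
    (hloc : LocallyIntegrable f volume) (hf : campanato1Norm n α f < ⊤)
    {x₀ x : EuclideanSpace ℝ (Fin n)} {r : ℝ} (hr : 0 < r) (hx : x ∈ closedBall x₀ r) (m : ℕ) :
    |ballAvg n f x₀ r - ballAvg n f x (2 ^ (m+1) * r)| ≤
      (∑ k ∈ Finset.range (m+1), ((2:ℝ) ^ (k+1) * r) ^ α) *
        (2 ^ n * (ωn n) ^ (α / (n:ℝ)) * (campanato1Norm n α f).toReal) := by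
  have hxx : dist x₀ x ≤ r := by rw [dist_comm]; exact mem_closedBall.mp hx
  induction m with
  | zero =>
      have hsub : closedBall x₀ r ⊆ closedBall x (2 ^ 1 * r) := by
        intro y hy
        rw [mem_closedBall] at hy ⊢
        calc dist y x ≤ dist y x₀ + dist x₀ x := dist_triangle _ _ _
          _ ≤ r + r := add_le_add hy hxx
          _ = 2 ^ 1 * r := by ring
      have h := avg_diff_le hn hloc hf hr (by positivity) (by norm_num)
        hsub
      rw [Finset.sum_range_one]
      calc |ballAvg n f x₀ r - ballAvg n f x (2 ^ 1 * r)|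
          ≤ 2 ^ n * ((ωn n) ^ (α / (n:ℝ)) * ((2:ℝ) ^ 1 * r) ^ α) *
            (campanato1Norm n α f).toReal := h
        _ = ((2:ℝ) ^ (0+1) * r) ^ α *
            (2 ^ n * (ωn n) ^ (α / (n:ℝ)) * (campanato1Norm n α f).toReal) := by
            norm_num; ring
  | succ m ih =>
      have hρ₁ : (0:ℝ) < 2 ^ (m+1) * r := by positivity
      have hsub : closedBall x (2 ^ (m+1) * r) ⊆ closedBall x (2 ^ (m+2) * r) := by
        apply closedBall_subset_closedBall
        have : (2:ℝ) ^ (m+1) ≤ 2 ^ (m+2) := by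
          apply pow_le_pow_right₀ (by norm_num) (by omega)
        nlinarith
      have h2 : |ballAvg n f x (2 ^ (m+1) * r) - ballAvg n f x (2 ^ (m+2) * r)| ≤
          2 ^ n * ((ωn n) ^ (α / (n:ℝ)) * ((2:ℝ) ^ (m+2) * r) ^ α) *
            (campanato1Norm n α f).toReal := by
        apply avg_diff_le hn hloc hf hρ₁ (by positivity) _ hsub
        rw [pow_succ]
        ring_nf
        exact le_refl _
      calc |ballAvg n f x₀ r - ballAvg n f x (2 ^ (m+1+1) * r)|
          ≤ |ballAvg n f x₀ r - ballAvg n f x (2 ^ (m+1) * r)| +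
            |ballAvg n f x (2 ^ (m+1) * r) - ballAvg n f x (2 ^ (m+2) * r)| := by
            have := abs_sub_le (ballAvg n f x₀ r) (ballAvg n f x (2 ^ (m+1) * r))
              (ballAvg n f x (2 ^ (m+2) * r))
            convert this using 3 <;> ring_nf
        _ ≤ (∑ k ∈ Finset.range (m+1), ((2:ℝ) ^ (k+1) * r) ^ α) *
              (2 ^ n * (ωn n) ^ (α / (n:ℝ)) * (campanato1Norm n α f).toReal) +
            2 ^ n * ((ωn n) ^ (α / (n:ℝ)) * ((2:ℝ) ^ (m+2) * r) ^ α) *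
              (campanato1Norm n α f).toReal := add_le_add ih h2
        _ = (∑ k ∈ Finset.range (m+1+1), ((2:ℝ) ^ (k+1) * r) ^ α) *
              (2 ^ n * (ωn n) ^ (α / (n:ℝ)) * (campanato1Norm n α f).toReal) := by
            conv_rhs => rw [Finset.sum_range_succ]
            ring

lemma ring_bound {n : ℕ} (hn : 1 ≤ n) {α : ℝ} {f : EuclideanSpace ℝ (Fin n) → ℝ}
    (hloc : LocallyIntegrable f volume) (hf : campanato1Norm n α f < ⊤)
    {x₀ x : EuclideanSpace ℝ (Fin n)} {r : ℝ} (hr : 0 < r) (hx : x ∈ closedBall x₀ r) (j : ℕ) :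
    ∫⁻ y in {y : EuclideanSpace ℝ (Fin n) | 2 ^ (j+3) * r ≤ ‖x - y‖ ∧ ‖x - y‖ < 2 ^ (j+4) * r},
        ENNReal.ofReal (|f y - ballAvg n f x₀ r| / ‖x - y‖ ^ ((n : ℝ) - 1)) ≤
      ENNReal.ofReal (2 ^ n * (2 ^ (j+3) * r) *
        ((ωn n) ^ (1 + α/(n:ℝ)) *
          ((2 ^ (j+4) * r) ^ α +
            2 ^ n * ∑ k ∈ Finset.range (j+4), ((2:ℝ) ^ (k+1) * r) ^ α)) *
        (campanato1Norm n α f).toReal) := by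
  set ρ : ℝ := 2 ^ (j+3) * r with hρ
  set ρ' : ℝ := 2 ^ (j+4) * r with hρ'
  have hρpos : 0 < ρ := by positivity
  have hρ'pos : 0 < ρ' := by positivity
  have hρ'2 : ρ' = 2 * ρ := by rw [hρ, hρ']; ring
  set b : ℝ := ballAvg n f x₀ r with hb
  set a' : ℝ := ballAvg n f x ρ' with ha'
  set M := (campanato1Norm n α f).toReal with hM
  have hMnn : 0 ≤ M := ENNReal.toReal_nonneg
  set A : Set (EuclideanSpace ℝ (Fin n)) := {y | ρ ≤ ‖x - y‖ ∧ ‖x - y‖ < ρ'} with hA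
  have hAmeas : MeasurableSet A := by
    have : A = (ball x ρ)ᶜ ∩ ball x ρ' := by
      ext y
      simp only [hA, Set.mem_setOf_eq, Set.mem_inter_iff, Set.mem_compl_iff, mem_ball,
        dist_comm y x, dist_eq_norm, not_lt]
    rw [this]
    exact measurableSet_ball.compl.inter measurableSet_ball
  have hexp : (0:ℝ) ≤ (n:ℝ) - 1 := by
    have : (1:ℝ) ≤ (n:ℝ) := by exact_mod_cast hn
    linarith
  -- pointwise kernel bound on A
  have hpt : ∀ y ∈ A, ENNReal.ofReal (|f y - b| / ‖x - y‖ ^ ((n : ℝ) - 1)) ≤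
      ENNReal.ofReal ((ρ ^ ((n:ℝ) - 1))⁻¹) * ENNReal.ofReal (|f y - b|) := by
    intro y hy
    rw [← ENNReal.ofReal_mul (by positivity)]
    apply ENNReal.ofReal_le_ofReal
    rw [div_eq_inv_mul]
    apply mul_le_mul_of_nonneg_right _ (abs_nonneg _)
    apply inv_anti₀ (by positivity)
    exact Real.rpow_le_rpow hρpos.le hy.1 hexp
  calc ∫⁻ y in A, ENNReal.ofReal (|f y - b| / ‖x - y‖ ^ ((n : ℝ) - 1))
      ≤ ∫⁻ y in A, ENNReal.ofReal ((ρ ^ ((n:ℝ) - 1))⁻¹) * ENNReal.ofReal (|f y - b|) :=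
        lintegral_mono_ae ((ae_restrict_iff' hAmeas).mpr (Filter.Eventually.of_forall hpt))
    _ = ENNReal.ofReal ((ρ ^ ((n:ℝ) - 1))⁻¹) * ∫⁻ y in A, ENNReal.ofReal (|f y - b|) :=
        lintegral_const_mul' _ _ ENNReal.ofReal_ne_top
    _ ≤ ENNReal.ofReal ((ρ ^ ((n:ℝ) - 1))⁻¹) *
          ∫⁻ y in closedBall x ρ', ENNReal.ofReal (|f y - b|) := by
        gcongr
        intro y hy
        rw [mem_closedBall, dist_comm, dist_eq_norm]
        exact hy.2.le
    _ = ENNReal.ofReal ((ρ ^ ((n:ℝ) - 1))⁻¹) *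
          ENNReal.ofReal (∫ y in closedBall x ρ', |f y - b|) := by
        rw [ofReal_integral_eq_lintegral_ofReal (dev_integrableOn hloc x ρ' b)
          (Filter.Eventually.of_forall fun y => abs_nonneg _)]
    _ ≤ ENNReal.ofReal (2 ^ n * ρ * ((ωn n) ^ (1 + α/(n:ℝ)) *
          (ρ' ^ α + 2 ^ n * ∑ k ∈ Finset.range (j+4), ((2:ℝ) ^ (k+1) * r) ^ α)) * M) := by
        rw [← ENNReal.ofReal_mul (by positivity)]
        apply ENNReal.ofReal_le_ofReal
        set S : ℝ := ∑ k ∈ Finset.range (j+4), ((2:ℝ) ^ (k+1) * r) ^ α with hS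
        have hSnn : 0 ≤ S := Finset.sum_nonneg fun k _ => Real.rpow_nonneg (by positivity) _
        set V' := (volume (closedBall x ρ')).toReal with hV'
        have hV'pos : 0 < V' := vol_pos n x hρ'pos
        have hωpos := ωn_pos n
        have hchain : |a' - b| ≤ S * (2 ^ n * (ωn n) ^ (α / (n:ℝ)) * M) := by
          rw [abs_sub_comm]
          have := chain_bound hn hloc hf hr hx (j+3)
          convert this using 4
        have htri : ∫ y in closedBall x ρ', |f y - b| ≤
            (∫ y in closedBall x ρ', |f y - a'|) + V' * |a' - b| := by
          have h1 : ∫ y in closedBall x ρ', |f y - b| ≤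
              ∫ y in closedBall x ρ', (|f y - a'| + |a' - b|) := by
            apply setIntegral_mono_on (dev_integrableOn hloc x ρ' b)
              ((dev_integrableOn hloc x ρ' a').add
                (integrableOn_const measure_closedBall_lt_top.ne))
              measurableSet_closedBall
            intro y _
            calc |f y - b| = |(f y - a') + (a' - b)| := by ring_nf
              _ ≤ |f y - a'| + |a' - b| := abs_add_le _ _
          rw [integral_add (dev_integrableOn hloc x ρ' a')
            (integrableOn_const measure_closedBall_lt_top.ne),
            setIntegral_const, smul_eq_mul] at h1
          exact h1
        have hcamp : ∫ y in closedBall x ρ', |f y - a'| ≤ V' ^ (α / (n:ℝ)) * V' * M :=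
          camp_int_le hf x hρ'pos
        have hVr : V' ^ (α / (n:ℝ)) = ρ' ^ α * (ωn n) ^ (α / (n:ℝ)) := by
          rw [hV', vol_toReal n x hρ'pos.le, Real.mul_rpow (by positivity) (by positivity)]
          congr 1
          rw [← Real.rpow_natCast ρ' n, ← Real.rpow_mul hρ'pos.le]
          congr 1
          have : (n:ℝ) ≠ 0 := Nat.cast_ne_zero.mpr (by omega)
          field_simp
        have hItot : ∫ y in closedBall x ρ', |f y - b| ≤
            V' * ((ωn n) ^ (α / (n:ℝ)) * (ρ' ^ α + 2 ^ n * S)) * M := by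
          calc ∫ y in closedBall x ρ', |f y - b|
              ≤ (∫ y in closedBall x ρ', |f y - a'|) + V' * |a' - b| := htri
            _ ≤ V' ^ (α / (n:ℝ)) * V' * M + V' * (S * (2 ^ n * (ωn n) ^ (α / (n:ℝ)) * M)) := by
                apply add_le_add hcamp
                exact mul_le_mul_of_nonneg_left hchain hV'pos.le
            _ = V' * ((ωn n) ^ (α / (n:ℝ)) * (ρ' ^ α + 2 ^ n * S)) * M := by
                rw [hVr]; ring
        have hkey : (ρ ^ ((n:ℝ) - 1))⁻¹ * (V' * ((ωn n) ^ (α / (n:ℝ)) * (ρ' ^ α + 2 ^ n * S)) * M)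
            = 2 ^ n * ρ * ((ωn n) ^ (1 + α/(n:ℝ)) * (ρ' ^ α + 2 ^ n * S)) * M := by
          rw [hV', vol_toReal n x hρ'pos.le]
          have h1 : ρ' ^ n = 2 ^ n * ρ ^ n := by rw [hρ'2, mul_pow]
          have h2 : (ρ ^ ((n:ℝ) - 1))⁻¹ * ρ ^ n = ρ := by
            rw [← Real.rpow_natCast ρ n, ← Real.rpow_neg hρpos.le, ← Real.rpow_add hρpos]
            rw [show -((n:ℝ) - 1) + (n:ℝ) = 1 by ring, Real.rpow_one]
          have h3 : (ωn n) * (ωn n) ^ (α / (n:ℝ)) = (ωn n) ^ (1 + α/(n:ℝ)) := by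
            rw [Real.rpow_add hωpos, Real.rpow_one]
          calc (ρ ^ ((n:ℝ) - 1))⁻¹ * ((ρ' ^ n * ωn n) * ((ωn n) ^ (α / (n:ℝ)) * (ρ' ^ α + 2 ^ n * S)) * M)
              = ((ρ ^ ((n:ℝ) - 1))⁻¹ * ρ ^ n) * 2 ^ n * ((ωn n * (ωn n) ^ (α / (n:ℝ))) * (ρ' ^ α + 2 ^ n * S)) * M := by
                rw [h1]; ring
            _ = 2 ^ n * ρ * ((ωn n) ^ (1 + α/(n:ℝ)) * (ρ' ^ α + 2 ^ n * S)) * M := by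
                rw [h2, h3]; ring
        rw [← hkey]
        exact mul_le_mul_of_nonneg_left hItot (by positivity)

lemma lintegral_finset_biUnion_le {X : Type*} [MeasurableSpace X] (μ : Measure X)
    (g : X → ℝ≥0∞) (s : Finset ℕ) (t : ℕ → Set X) :
    ∫⁻ y in ⋃ j ∈ s, t j, g y ∂μ ≤ ∑ j ∈ s, ∫⁻ y in t j, g y ∂μ := by
  classical
  induction s using Finset.induction with
  | empty => simp
  | insert a s' h ih =>
      rw [Finset.set_biUnion_insert, Finset.sum_insert h]
      exact le_trans (lintegral_union_le _ _ _) (add_le_add le_rfl ih)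

lemma annulus_cover {n : ℕ} (x : EuclideanSpace ℝ (Fin n)) {r t : ℝ} (hr : 0 < r)
    (J : ℕ) (hJ : t ≤ 2 ^ (J+4) * r) :
    {y : EuclideanSpace ℝ (Fin n) | 8 * r ≤ ‖x - y‖ ∧ ‖x - y‖ < t} ⊆
      ⋃ j ∈ Finset.range (J+1),
        {y : EuclideanSpace ℝ (Fin n) | 2 ^ (j+3) * r ≤ ‖x - y‖ ∧ ‖x - y‖ < 2 ^ (j+4) * r} := by
  intro y hy
  obtain ⟨h1, h2⟩ := hy
  set d := ‖x - y‖ with hd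
  have hPJ : d < 2 ^ (J+4) * r := lt_of_lt_of_le h2 hJ
  have hex : ∃ j, d < 2 ^ (j+4) * r := ⟨J, hPJ⟩
  classical
  set j := Nat.find hex with hj
  have hjle : j ≤ J := Nat.find_min' hex hPJ
  have hspec : d < 2 ^ (j+4) * r := Nat.find_spec hex
  have hlow : 2 ^ (j+3) * r ≤ d := by
    rcases Nat.eq_zero_or_pos j with h0 | hpos
    · rw [h0]
      calc (2:ℝ) ^ (0+3) * r = 8 * r := by norm_num
        _ ≤ d := h1
    · obtain ⟨k, hk⟩ := Nat.exists_eq_succ_of_ne_zero hpos.ne'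
      have := Nat.find_min hex (m := k) (by omega)
      push_neg at this
      rw [hk, show k + 1 + 3 = k + 4 from by omega]
      exact this
  refine Set.mem_biUnion (Finset.mem_range.mpr (by omega)) ⟨hlow, hspec⟩

noncomputable def uterm (n : ℕ) (α r M : ℝ) (j : ℕ) : ℝ :=
  2 ^ n * (2 ^ (j+3) * r) *
    ((ωn n) ^ (1 + α/(n:ℝ)) *
      ((2 ^ (j+4) * r) ^ α + 2 ^ n * ∑ k ∈ Finset.range (j+4), ((2:ℝ) ^ (k+1) * r) ^ α)) * M

lemma uterm_nonneg (n : ℕ) (α r : ℝ) (M : ℝ) (hr : 0 < r) (hM : 0 ≤ M) (j : ℕ) :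
    0 ≤ uterm n α r M j := by
  have hS : (0:ℝ) ≤ ∑ k ∈ Finset.range (j+4), ((2:ℝ) ^ (k+1) * r) ^ α :=
    Finset.sum_nonneg fun k _ => Real.rpow_nonneg (by positivity) _
  have hω := ωn_pos n
  have h1 : (0:ℝ) ≤ (2 ^ (j+4) * r) ^ α := Real.rpow_nonneg (by positivity) _
  unfold uterm
  positivity

lemma master {n : ℕ} (hn : 1 ≤ n) {α : ℝ} {f : EuclideanSpace ℝ (Fin n) → ℝ}
    (hloc : LocallyIntegrable f volume) (hf : campanato1Norm n α f < ⊤)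
    {x₀ x : EuclideanSpace ℝ (Fin n)} {r t : ℝ} (hr : 0 < r) (hx : x ∈ closedBall x₀ r)
    (J : ℕ) (hJ : t ≤ 2 ^ (J+4) * r) :
    ∫⁻ y in {y : EuclideanSpace ℝ (Fin n) | 8 * r ≤ ‖x - y‖ ∧ ‖x - y‖ < t},
        ENNReal.ofReal (|f y - ballAvg n f x₀ r| / ‖x - y‖ ^ ((n : ℝ) - 1)) ≤
      ENNReal.ofReal (∑ j ∈ Finset.range (J+1),
        uterm n α r ((campanato1Norm n α f).toReal) j) := by
  calc ∫⁻ y in {y : EuclideanSpace ℝ (Fin n) | 8 * r ≤ ‖x - y‖ ∧ ‖x - y‖ < t},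
        ENNReal.ofReal (|f y - ballAvg n f x₀ r| / ‖x - y‖ ^ ((n : ℝ) - 1))
      ≤ ∫⁻ y in ⋃ j ∈ Finset.range (J+1),
          {y : EuclideanSpace ℝ (Fin n) | 2 ^ (j+3) * r ≤ ‖x - y‖ ∧ ‖x - y‖ < 2 ^ (j+4) * r},
          ENNReal.ofReal (|f y - ballAvg n f x₀ r| / ‖x - y‖ ^ ((n : ℝ) - 1)) :=
        lintegral_mono_set (annulus_cover x hr J hJ)
    _ ≤ ∑ j ∈ Finset.range (J+1), ∫⁻ y in
          {y : EuclideanSpace ℝ (Fin n) | 2 ^ (j+3) * r ≤ ‖x - y‖ ∧ ‖x - y‖ < 2 ^ (j+4) * r},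
          ENNReal.ofReal (|f y - ballAvg n f x₀ r| / ‖x - y‖ ^ ((n : ℝ) - 1)) :=
        lintegral_finset_biUnion_le volume _ _ _
    _ ≤ ∑ j ∈ Finset.range (J+1),
          ENNReal.ofReal (uterm n α r ((campanato1Norm n α f).toReal) j) :=
        Finset.sum_le_sum fun j _ => ring_bound hn hloc hf hr hx j
    _ = ENNReal.ofReal (∑ j ∈ Finset.range (J+1),
          uterm n α r ((campanato1Norm n α f).toReal) j) :=
        (ENNReal.ofReal_sum_of_nonneg fun j _ =>
          uterm_nonneg n α r _ hr ENNReal.toReal_nonneg j).symm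

lemma pow_rpow_comm (α : ℝ) (m : ℕ) : ((2:ℝ) ^ m) ^ α = ((2:ℝ) ^ α) ^ m := by
  rw [← Real.rpow_natCast (2:ℝ) m, ← Real.rpow_mul (by norm_num), mul_comm,
    Real.rpow_mul (by norm_num), Real.rpow_natCast]

lemma S_bound_neg {α r : ℝ} (hα : α < 0) (hr : 0 < r) (m : ℕ) :
    ∑ k ∈ Finset.range m, ((2:ℝ) ^ (k+1) * r) ^ α ≤ r ^ α * (1 - (2:ℝ) ^ α)⁻¹ := by
  set q : ℝ := (2:ℝ) ^ α with hq
  have hq0 : 0 ≤ q := Real.rpow_nonneg (by norm_num) _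
  have hq1 : q < 1 := Real.rpow_lt_one_of_one_lt_of_neg (by norm_num) hα
  have hterm : ∀ k, ((2:ℝ) ^ (k+1) * r) ^ α = r ^ α * q ^ (k+1) := by
    intro k
    rw [Real.mul_rpow (by positivity) hr.le, pow_rpow_comm]
    ring
  calc ∑ k ∈ Finset.range m, ((2:ℝ) ^ (k+1) * r) ^ α
      = r ^ α * ∑ k ∈ Finset.range m, q ^ (k+1) := by
        rw [Finset.mul_sum]; exact Finset.sum_congr rfl fun k _ => hterm k
    _ ≤ r ^ α * (1 - q)⁻¹ := by
        apply mul_le_mul_of_nonneg_left _ (Real.rpow_nonneg hr.le _)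
        calc ∑ k ∈ Finset.range m, q ^ (k+1) ≤ ∑ k ∈ Finset.range m, q ^ k := by
              apply Finset.sum_le_sum
              intro k _
              exact pow_le_pow_of_le_one hq0 hq1.le (by omega)
          _ ≤ ∑' k : ℕ, q ^ k :=
              Summable.sum_le_tsum _ (fun k _ => pow_nonneg hq0 k)
                (summable_geometric_of_lt_one hq0 hq1)
          _ = (1 - q)⁻¹ := tsum_geometric_of_lt_one hq0 hq1

lemma S_bound_pos {α r : ℝ} (hα : 0 < α) (hr : 0 < r) (m : ℕ) :
    ∑ k ∈ Finset.range m, ((2:ℝ) ^ (k+1) * r) ^ α ≤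
      ((2:ℝ) ^ (m+1) * r) ^ α * ((2:ℝ) ^ α - 1)⁻¹ := by
  set q : ℝ := (2:ℝ) ^ α with hq
  have hq1 : 1 < q := Real.one_lt_rpow_iff_of_pos (by norm_num) |>.mpr (Or.inl ⟨by norm_num, hα⟩)
  have hq0 : 0 < q := lt_trans one_pos hq1
  have hterm : ∀ k, ((2:ℝ) ^ (k+1) * r) ^ α = r ^ α * q ^ (k+1) := by
    intro k
    rw [Real.mul_rpow (by positivity) hr.le, pow_rpow_comm]
    ring
  have hRHS : ((2:ℝ) ^ (m+1) * r) ^ α = r ^ α * q ^ (m+1) := hterm m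
  rw [hRHS]
  calc ∑ k ∈ Finset.range m, ((2:ℝ) ^ (k+1) * r) ^ α
      = r ^ α * (q * ∑ k ∈ Finset.range m, q ^ k) := by
        rw [Finset.mul_sum, Finset.mul_sum]
        exact Finset.sum_congr rfl fun k _ => by rw [hterm k]; ring
    _ = r ^ α * (q * ((q ^ m - 1) / (q - 1))) := by rw [geom_sum_eq hq1.ne' m]
    _ ≤ r ^ α * q ^ (m+1) * (q - 1)⁻¹ := by
        have h1 : q * ((q ^ m - 1) / (q - 1)) ≤ q ^ (m+1) * (q - 1)⁻¹ := by
          rw [div_eq_mul_inv]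
          have hq1' : (0:ℝ) < (q - 1)⁻¹ := by
            apply inv_pos.mpr; linarith
          calc q * ((q ^ m - 1) * (q - 1)⁻¹) = q * (q ^ m - 1) * (q - 1)⁻¹ := by ring
            _ ≤ q * q ^ m * (q - 1)⁻¹ := by
                apply mul_le_mul_of_nonneg_right _ hq1'.le
                apply mul_le_mul_of_nonneg_left _ hq0.le
                linarith
            _ = q ^ (m+1) * (q - 1)⁻¹ := by rw [pow_succ]; ring
        calc r ^ α * (q * ((q ^ m - 1) / (q - 1))) ≤ r ^ α * (q ^ (m+1) * (q - 1)⁻¹) :=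
              mul_le_mul_of_nonneg_left h1 (Real.rpow_nonneg hr.le _)
          _ = r ^ α * q ^ (m+1) * (q - 1)⁻¹ := by ring

lemma geom_pow_sum_le (J : ℕ) : ∑ j ∈ Finset.range (J+1), (2:ℝ) ^ (j+3) ≤ 2 ^ (J+4) := by
  have : ∑ j ∈ Finset.range (J+1), (2:ℝ) ^ (j+3) = 8 * ∑ j ∈ Finset.range (J+1), (2:ℝ) ^ j := by
    rw [Finset.mul_sum]
    exact Finset.sum_congr rfl fun j _ => by rw [pow_add]; ring
  rw [this, geom_sum_eq (by norm_num : (2:ℝ) ≠ 1)]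
  have h2 : (2:ℝ) ^ (J+1) ≥ 1 := one_le_pow₀ (by norm_num)
  have : (2:ℝ) ^ (J+4) = 8 * 2 ^ (J+1) := by rw [show J+4 = (J+1)+3 from by omega, pow_add]; ring
  rw [this]
  nlinarith

lemma sum_u_neg {n : ℕ} {α r t M : ℝ} (hα : α < 0) (hr : 0 < r) (ht : 8 * r < t)
    (hM : 0 ≤ M) (J : ℕ) (hJ2 : (2:ℝ) ^ (J+4) * r ≤ 2 * t) :
    ∑ j ∈ Finset.range (J+1), uterm n α r M j ≤
      (2 * (2 ^ n * (ωn n) ^ (1 + α/(n:ℝ))) * (1 + 2 ^ n * (1 - (2:ℝ) ^ α)⁻¹)) *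
        t * r ^ α * M := by
  have hω := ωn_pos n
  set e := 1 + α/(n:ℝ) with he
  set Cq : ℝ := (1 - (2:ℝ) ^ α)⁻¹ with hCq
  have hq1 : (2:ℝ) ^ α < 1 := Real.rpow_lt_one_of_one_lt_of_neg (by norm_num) hα
  have hCqnn : 0 ≤ Cq := by rw [hCq]; apply inv_nonneg.mpr; linarith
  have hra : (0:ℝ) ≤ r ^ α := Real.rpow_nonneg hr.le _
  have hterm : ∀ j, uterm n α r M j ≤
      (2 ^ n * (ωn n) ^ e * (r ^ α * (1 + 2 ^ n * Cq)) * M * r) * 2 ^ (j+3) := by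
    intro j
    have hA : ((2:ℝ) ^ (j+4) * r) ^ α ≤ r ^ α := by
      apply Real.rpow_le_rpow_of_nonpos hr _ hα.le
      nlinarith [one_le_pow₀ (by norm_num : (1:ℝ) ≤ 2) (n := j+4)]
    have hS : ∑ k ∈ Finset.range (j+4), ((2:ℝ) ^ (k+1) * r) ^ α ≤ r ^ α * Cq :=
      S_bound_neg hα hr (j+4)
    have hinner : ((2:ℝ) ^ (j+4) * r) ^ α +
        2 ^ n * ∑ k ∈ Finset.range (j+4), ((2:ℝ) ^ (k+1) * r) ^ α ≤
        r ^ α * (1 + 2 ^ n * Cq) := by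
      have h2n : (0:ℝ) ≤ 2 ^ n := by positivity
      nlinarith
    calc uterm n α r M j
        = 2 ^ n * (2 ^ (j+3) * r) * ((ωn n) ^ e *
            (((2:ℝ) ^ (j+4) * r) ^ α +
              2 ^ n * ∑ k ∈ Finset.range (j+4), ((2:ℝ) ^ (k+1) * r) ^ α)) * M := rfl
      _ ≤ 2 ^ n * (2 ^ (j+3) * r) * ((ωn n) ^ e * (r ^ α * (1 + 2 ^ n * Cq))) * M := by
          have hωe : (0:ℝ) ≤ (ωn n) ^ e := Real.rpow_nonneg (ωn_pos n).le _
          have hfac : (0:ℝ) ≤ 2 ^ n * (2 ^ (j+3) * r) := by positivity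
          have h2 := mul_le_mul_of_nonneg_left (mul_le_mul_of_nonneg_left hinner hωe) hfac
          exact mul_le_mul_of_nonneg_right h2 hM
      _ = (2 ^ n * (ωn n) ^ e * (r ^ α * (1 + 2 ^ n * Cq)) * M * r) * 2 ^ (j+3) := by ring
  calc ∑ j ∈ Finset.range (J+1), uterm n α r M j
      ≤ ∑ j ∈ Finset.range (J+1),
          (2 ^ n * (ωn n) ^ e * (r ^ α * (1 + 2 ^ n * Cq)) * M * r) * 2 ^ (j+3) :=
        Finset.sum_le_sum fun j _ => hterm j
    _ = (2 ^ n * (ωn n) ^ e * (r ^ α * (1 + 2 ^ n * Cq)) * M * r) *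
          ∑ j ∈ Finset.range (J+1), (2:ℝ) ^ (j+3) := by rw [Finset.mul_sum]
    _ ≤ (2 ^ n * (ωn n) ^ e * (r ^ α * (1 + 2 ^ n * Cq)) * M * r) * 2 ^ (J+4) := by
        apply mul_le_mul_of_nonneg_left (geom_pow_sum_le J) (by positivity)
    _ = (2 ^ n * (ωn n) ^ e * (r ^ α * (1 + 2 ^ n * Cq)) * M) * (2 ^ (J+4) * r) := by ring
    _ ≤ (2 ^ n * (ωn n) ^ e * (r ^ α * (1 + 2 ^ n * Cq)) * M) * (2 * t) := by
        apply mul_le_mul_of_nonneg_left hJ2 (by positivity)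
    _ = (2 * (2 ^ n * (ωn n) ^ e) * (1 + 2 ^ n * Cq)) * t * r ^ α * M := by ring

lemma sum_pow_le {Q : ℝ} (hQ : 2 ≤ Q) (m : ℕ) : ∑ j ∈ Finset.range m, Q ^ j ≤ Q ^ m := by
  induction m with
  | zero => simp
  | succ m ih =>
      rw [Finset.sum_range_succ, pow_succ]
      have hQm : (0:ℝ) ≤ Q ^ m := by positivity
      nlinarith

lemma sum_u_pos {n : ℕ} {α r t M : ℝ} (hα : 0 < α) (hr : 0 < r) (ht : 8 * r < t)
    (hM : 0 ≤ M) (J : ℕ) (hJ2 : (2:ℝ) ^ (J+4) * r ≤ 2 * t) :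
    ∑ j ∈ Finset.range (J+1), uterm n α r M j ≤
      (2 ^ n * (ωn n) ^ (1 + α/(n:ℝ)) * (1 + 2 ^ n * (2:ℝ) ^ α * ((2:ℝ) ^ α - 1)⁻¹) *
        (2:ℝ) ^ α * (2:ℝ) ^ (1+α)) * t ^ (1+α) * M := by
  have hω := ωn_pos n
  set e := 1 + α/(n:ℝ) with he
  set Cq : ℝ := ((2:ℝ) ^ α - 1)⁻¹ with hCq
  have hq1 : 1 < (2:ℝ) ^ α :=
    Real.one_lt_rpow_iff_of_pos (by norm_num) |>.mpr (Or.inl ⟨by norm_num, hα⟩)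
  have hCqnn : 0 ≤ Cq := by rw [hCq]; apply inv_nonneg.mpr; linarith
  set K : ℝ := 1 + 2 ^ n * (2:ℝ) ^ α * Cq with hK
  have hKnn : (0:ℝ) ≤ K := by positivity
  have hQ2 : (2:ℝ) ≤ (2:ℝ) ^ (1+α) := by
    calc (2:ℝ) = 2 ^ (1:ℝ) := (Real.rpow_one 2).symm
      _ ≤ 2 ^ (1+α) := Real.rpow_le_rpow_of_exponent_le (by norm_num) (by linarith)
  set Q : ℝ := (2:ℝ) ^ (1+α) with hQdef
  have hQpos : 0 < Q := by linarith
  have hterm : ∀ j, uterm n α r M j ≤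
      (2 ^ n * (ωn n) ^ e * K * (2:ℝ) ^ α * M * r ^ (1+α)) * Q ^ (j+3) := by
    intro j
    have hbase : (0:ℝ) < 2 ^ (j+3) * r := by positivity
    have hA : (0:ℝ) ≤ ((2:ℝ) ^ (j+4) * r) ^ α := Real.rpow_nonneg (by positivity) _
    have hS : ∑ k ∈ Finset.range (j+4), ((2:ℝ) ^ (k+1) * r) ^ α ≤
        ((2:ℝ) ^ (j+5) * r) ^ α * Cq := S_bound_pos hα hr (j+4)
    have h25 : ((2:ℝ) ^ (j+5) * r) ^ α = (2:ℝ) ^ α * ((2:ℝ) ^ (j+4) * r) ^ α := by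
      rw [← Real.mul_rpow (by norm_num) (by positivity)]
      congr 1
      rw [show j+5 = (j+4)+1 from rfl, pow_succ]
      ring
    have hinner : ((2:ℝ) ^ (j+4) * r) ^ α +
        2 ^ n * ∑ k ∈ Finset.range (j+4), ((2:ℝ) ^ (k+1) * r) ^ α ≤
        K * ((2:ℝ) ^ (j+4) * r) ^ α := by
      rw [h25] at hS
      have h2n : (0:ℝ) ≤ 2 ^ n := by positivity
      have := mul_le_mul_of_nonneg_left hS h2n
      rw [hK]; nlinarith
    have hcollect : (2 ^ (j+3) * r) * ((2:ℝ) ^ (j+4) * r) ^ α =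
        (2:ℝ) ^ α * ((2 ^ (j+3) * r) ^ (1+α)) := by
      have h24 : ((2:ℝ) ^ (j+4) * r) ^ α = (2:ℝ) ^ α * ((2:ℝ) ^ (j+3) * r) ^ α := by
        rw [← Real.mul_rpow (by norm_num) (by positivity)]
        congr 1
        rw [show j+4 = (j+3)+1 from rfl, pow_succ]
        ring
      rw [h24, Real.rpow_add hbase, Real.rpow_one]
      ring
    have hsplit : ((2:ℝ) ^ (j+3) * r) ^ (1+α) = Q ^ (j+3) * r ^ (1+α) := by
      rw [Real.mul_rpow (by positivity) hr.le, pow_rpow_comm]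
    have hωe : (0:ℝ) ≤ (ωn n) ^ e := Real.rpow_nonneg hω.le _
    calc uterm n α r M j
        = 2 ^ n * (2 ^ (j+3) * r) * ((ωn n) ^ e *
            (((2:ℝ) ^ (j+4) * r) ^ α +
              2 ^ n * ∑ k ∈ Finset.range (j+4), ((2:ℝ) ^ (k+1) * r) ^ α)) * M := rfl
      _ ≤ 2 ^ n * (2 ^ (j+3) * r) * ((ωn n) ^ e * (K * ((2:ℝ) ^ (j+4) * r) ^ α)) * M := by
          have h2 := mul_le_mul_of_nonneg_left (mul_le_mul_of_nonneg_left hinner hωe)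
            (show (0:ℝ) ≤ 2 ^ n * (2 ^ (j+3) * r) by positivity)
          exact mul_le_mul_of_nonneg_right h2 hM
      _ = 2 ^ n * (ωn n) ^ e * K * M * ((2 ^ (j+3) * r) * ((2:ℝ) ^ (j+4) * r) ^ α) := by ring
      _ = (2 ^ n * (ωn n) ^ e * K * (2:ℝ) ^ α * M * r ^ (1+α)) * Q ^ (j+3) := by
          rw [hcollect, hsplit]; ring
  have hsum3 : ∑ j ∈ Finset.range (J+1), Q ^ (j+3) ≤ Q ^ (J+4) := by
    have : ∑ j ∈ Finset.range (J+1), Q ^ (j+3) = Q ^ 3 * ∑ j ∈ Finset.range (J+1), Q ^ j := by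
      rw [Finset.mul_sum]
      exact Finset.sum_congr rfl fun j _ => by rw [pow_add]; ring
    rw [this, show J+4 = 3+(J+1) from by omega, pow_add]
    exact mul_le_mul_of_nonneg_left (sum_pow_le hQ2 (J+1)) (by positivity)
  have hfinal : Q ^ (J+4) * r ^ (1+α) ≤ (2:ℝ) ^ (1+α) * t ^ (1+α) := by
    have h1 : Q ^ (J+4) * r ^ (1+α) = ((2:ℝ) ^ (J+4) * r) ^ (1+α) := by
      rw [Real.mul_rpow (by positivity) hr.le, pow_rpow_comm]
    have h2 : ((2:ℝ) ^ (J+4) * r) ^ (1+α) ≤ (2 * t) ^ (1+α) :=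
      Real.rpow_le_rpow (by positivity) hJ2 (by linarith)
    rw [h1]
    calc ((2:ℝ) ^ (J+4) * r) ^ (1+α) ≤ (2 * t) ^ (1+α) := h2
      _ = (2:ℝ) ^ (1+α) * t ^ (1+α) := Real.mul_rpow (by norm_num) (by linarith)
  calc ∑ j ∈ Finset.range (J+1), uterm n α r M j
      ≤ ∑ j ∈ Finset.range (J+1),
          (2 ^ n * (ωn n) ^ e * K * (2:ℝ) ^ α * M * r ^ (1+α)) * Q ^ (j+3) :=
        Finset.sum_le_sum fun j _ => hterm j
    _ = (2 ^ n * (ωn n) ^ e * K * (2:ℝ) ^ α * M * r ^ (1+α)) *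
          ∑ j ∈ Finset.range (J+1), Q ^ (j+3) := by rw [Finset.mul_sum]
    _ ≤ (2 ^ n * (ωn n) ^ e * K * (2:ℝ) ^ α * M * r ^ (1+α)) * Q ^ (J+4) := by
        apply mul_le_mul_of_nonneg_left hsum3
        have : (0:ℝ) ≤ r ^ (1+α) := Real.rpow_nonneg hr.le _
        have hωe : (0:ℝ) ≤ (ωn n) ^ e := Real.rpow_nonneg hω.le _
        positivity
    _ = (2 ^ n * (ωn n) ^ e * K * (2:ℝ) ^ α * M) * (Q ^ (J+4) * r ^ (1+α)) := by ring
    _ ≤ (2 ^ n * (ωn n) ^ e * K * (2:ℝ) ^ α * M) * ((2:ℝ) ^ (1+α) * t ^ (1+α)) := by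
        apply mul_le_mul_of_nonneg_left hfinal
        have hωe : (0:ℝ) ≤ (ωn n) ^ e := Real.rpow_nonneg hω.le _
        positivity
    _ = (2 ^ n * (ωn n) ^ e * K * (2:ℝ) ^ α * (2:ℝ) ^ (1+α)) * t ^ (1+α) * M := by ring

lemma sum_u_zero {n : ℕ} {r t M : ℝ} (hr : 0 < r) (ht : 8 * r < t)
    (hM : 0 ≤ M) (J : ℕ) (hJ2 : (2:ℝ) ^ (J+4) * r ≤ 2 * t)
    (hJlog : ((J:ℝ) + 5) ≤ 3 * Real.log (t/r)) :
    ∑ j ∈ Finset.range (J+1), uterm n 0 r M j ≤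
      (6 * 2 ^ n * 2 ^ n * ωn n) * t * Real.log (t/r) * M := by
  have hω := ωn_pos n
  have hlognn : 0 ≤ Real.log (t/r) := by nlinarith
  have huterm : ∀ j, uterm n 0 r M j =
      2 ^ n * (2 ^ (j+3) * r) * (ωn n * (1 + 2 ^ n * (j+4))) * M := by
    intro j
    unfold uterm
    rw [Real.rpow_zero]
    have h1 : ∑ k ∈ Finset.range (j+4), ((2:ℝ) ^ (k+1) * r) ^ (0:ℝ) = (j+4 : ℝ) := by
      rw [Finset.sum_congr rfl fun k _ => Real.rpow_zero _]
      simp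
    rw [h1]
    norm_num
  have hterm : ∀ j ∈ Finset.range (J+1), uterm n 0 r M j ≤
      (2 ^ n * 2 ^ n * ωn n * ((J:ℝ)+5) * M * r) * 2 ^ (j+3) := by
    intro j hj
    have hjJ : j ≤ J := by
      have := Finset.mem_range.mp hj; omega
    rw [huterm j]
    have h1 : (1 : ℝ) + 2 ^ n * (j+4) ≤ 2 ^ n * ((J:ℝ)+5) := by
      have h2n : (1:ℝ) ≤ 2 ^ n := one_le_pow₀ (by norm_num)
      have hjr : (j:ℝ) ≤ (J:ℝ) := by exact_mod_cast hjJ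
      nlinarith
    have h2 := mul_le_mul_of_nonneg_left h1 hω.le
    have h3 := mul_le_mul_of_nonneg_left h2
      (show (0:ℝ) ≤ 2 ^ n * (2 ^ (j+3) * r) by positivity)
    have h4 := mul_le_mul_of_nonneg_right h3 hM
    calc 2 ^ n * (2 ^ (j+3) * r) * (ωn n * (1 + 2 ^ n * (j+4))) * M
        ≤ 2 ^ n * (2 ^ (j+3) * r) * (ωn n * (2 ^ n * ((J:ℝ)+5))) * M := h4
      _ = (2 ^ n * 2 ^ n * ωn n * ((J:ℝ)+5) * M * r) * 2 ^ (j+3) := by ring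
  calc ∑ j ∈ Finset.range (J+1), uterm n 0 r M j
      ≤ ∑ j ∈ Finset.range (J+1), (2 ^ n * 2 ^ n * ωn n * ((J:ℝ)+5) * M * r) * 2 ^ (j+3) :=
        Finset.sum_le_sum hterm
    _ = (2 ^ n * 2 ^ n * ωn n * ((J:ℝ)+5) * M * r) * ∑ j ∈ Finset.range (J+1), (2:ℝ) ^ (j+3) := by
        rw [Finset.mul_sum]
    _ ≤ (2 ^ n * 2 ^ n * ωn n * ((J:ℝ)+5) * M * r) * 2 ^ (J+4) := by
        apply mul_le_mul_of_nonneg_left (geom_pow_sum_le J) (by positivity)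
    _ = (2 ^ n * 2 ^ n * ωn n * ((J:ℝ)+5) * M) * (2 ^ (J+4) * r) := by ring
    _ ≤ (2 ^ n * 2 ^ n * ωn n * ((J:ℝ)+5) * M) * (2 * t) := by
        apply mul_le_mul_of_nonneg_left hJ2 (by positivity)
    _ = (2 * 2 ^ n * 2 ^ n * ωn n) * ((J:ℝ)+5) * t * M := by ring
    _ ≤ (2 * 2 ^ n * 2 ^ n * ωn n) * (3 * Real.log (t/r)) * t * M := by
        have h1 : (0:ℝ) ≤ (2 * 2 ^ n * 2 ^ n * ωn n) := by positivity
        have h2 : (0:ℝ) ≤ t := by linarith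
        have := mul_le_mul_of_nonneg_left hJlog h1
        have := mul_le_mul_of_nonneg_right this h2
        exact mul_le_mul_of_nonneg_right this hM
    _ = (6 * 2 ^ n * 2 ^ n * ωn n) * t * Real.log (t/r) * M := by ring

lemma J_exists {r t : ℝ} (hr : 0 < r) (ht : 8 * r < t) :
    ∃ J : ℕ, t ≤ 2 ^ (J+4) * r ∧ (2:ℝ) ^ (J+4) * r ≤ 2 * t ∧
      ((J:ℝ) + 5) ≤ 3 * Real.log (t/r) := by
  have htpos : 0 < t := by linarith
  have hex : ∃ N : ℕ, t ≤ 2 ^ (N+4) * r := by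
    obtain ⟨N, hN⟩ := pow_unbounded_of_one_lt (t/r) (by norm_num : (1:ℝ) < 2)
    refine ⟨N, ?_⟩
    rw [div_lt_iff₀ hr] at hN
    have : (2:ℝ) ^ N ≤ 2 ^ (N+4) := by
      apply pow_le_pow_right₀ (by norm_num); omega
    nlinarith
  classical
  set J := Nat.find hex with hJdef
  have h1 : t ≤ 2 ^ (J+4) * r := Nat.find_spec hex
  have hlog2 := Real.log_two_gt_d9
  have htr8 : (8:ℝ) < t / r := by rw [lt_div_iff₀ hr]; linarith
  have hL2 : 2 ≤ Real.log (t/r) := by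
    have h8 : Real.log 8 ≤ Real.log (t/r) := Real.log_le_log (by norm_num) htr8.le
    have : Real.log 8 = 3 * Real.log 2 := by
      rw [show (8:ℝ) = 2 ^ (3:ℕ) from by norm_num, Real.log_pow]
      push_cast; ring
    rw [this] at h8
    nlinarith
  have h2 : (2:ℝ) ^ (J+4) * r ≤ 2 * t := by
    rcases Nat.eq_zero_or_pos J with h0 | hpos
    · rw [h0]; norm_num; nlinarith
    · obtain ⟨m, hm⟩ := Nat.exists_eq_succ_of_ne_zero hpos.ne'
      have hmin := Nat.find_min hex (m := m) (by omega)
      push_neg at hmin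
      have : (2:ℝ) ^ (J+4) = 2 * 2 ^ (m+4) := by
        rw [hm, show m+1+4 = (m+4)+1 from rfl, pow_succ]; ring
      rw [this]
      nlinarith
  refine ⟨J, h1, h2, ?_⟩
  rcases Nat.eq_zero_or_pos J with h0 | hpos
  · rw [h0]; norm_num; nlinarith
  · obtain ⟨m, hm⟩ := Nat.exists_eq_succ_of_ne_zero hpos.ne'
    have hmin := Nat.find_min hex (m := m) (by omega)
    push_neg at hmin
    have hlt : (2:ℝ) ^ (m+4) < t / r := by
      rw [lt_div_iff₀ hr]; linarith
    have hloglt : ((m:ℝ)+4) * Real.log 2 < Real.log (t/r) := by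
      have := Real.log_lt_log (by positivity) hlt
      rw [Real.log_pow] at this
      push_cast at this
      exact this
    rw [hm]
    push_cast
    nlinarith

/-- annulus integral of |f - f_B| / |x-y|^{n-1}. -/
theorem stmt5 (n : ℕ) (hn : 1 ≤ n) (α : ℝ) :
    ∃ c > (0 : ℝ), ∀ f : EuclideanSpace ℝ (Fin n) → ℝ, LocallyIntegrable f volume →
      campanato1Norm n α f < ⊤ →
    ∀ (x₀ x : EuclideanSpace ℝ (Fin n)) (r t : ℝ), 0 < r → x ∈ closedBall x₀ r →
      8 * r < t →
      ((α < 0 →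
        ∫⁻ y in {y : EuclideanSpace ℝ (Fin n) | 8 * r ≤ ‖x - y‖ ∧ ‖x - y‖ < t},
            ENNReal.ofReal (|f y - ballAvg n f x₀ r| / ‖x - y‖ ^ ((n : ℝ) - 1)) ≤
          ENNReal.ofReal (c * t * r ^ α * (campanato1Norm n α f).toReal)) ∧
      (α = 0 →
        ∫⁻ y in {y : EuclideanSpace ℝ (Fin n) | 8 * r ≤ ‖x - y‖ ∧ ‖x - y‖ < t},
            ENNReal.ofReal (|f y - ballAvg n f x₀ r| / ‖x - y‖ ^ ((n : ℝ) - 1)) ≤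
          ENNReal.ofReal (c * t * Real.log (t / r) * (campanato1Norm n α f).toReal)) ∧
      (0 < α →
        ∫⁻ y in {y : EuclideanSpace ℝ (Fin n) | 8 * r ≤ ‖x - y‖ ∧ ‖x - y‖ < t},
            ENNReal.ofReal (|f y - ballAvg n f x₀ r| / ‖x - y‖ ^ ((n : ℝ) - 1)) ≤
          ENNReal.ofReal (c * t ^ (1 + α) * (campanato1Norm n α f).toReal))) := by

  have hω := ωn_pos n
  rcases lt_trichotomy α 0 with hα | hα | hα
  · -- α < 0
    have hq1 : (2:ℝ) ^ α < 1 := Real.rpow_lt_one_of_one_lt_of_neg (by norm_num) hα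
    have hCqnn : (0:ℝ) ≤ (1 - (2:ℝ) ^ α)⁻¹ := by apply inv_nonneg.mpr; linarith
    have hωe : (0:ℝ) < (ωn n) ^ (1 + α/(n:ℝ)) := Real.rpow_pos_of_pos hω _
    refine ⟨2 * (2 ^ n * (ωn n) ^ (1 + α/(n:ℝ))) * (1 + 2 ^ n * (1 - (2:ℝ) ^ α)⁻¹), ?_, ?_⟩
    · positivity
    · intro f hloc hf x₀ x r t hr hx hrt
      refine ⟨fun _ => ?_, fun h => absurd h (by linarith), fun h => absurd h (by linarith)⟩
      obtain ⟨J, h1, h2, _⟩ := J_exists hr hrt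
      calc ∫⁻ y in {y : EuclideanSpace ℝ (Fin n) | 8 * r ≤ ‖x - y‖ ∧ ‖x - y‖ < t},
            ENNReal.ofReal (|f y - ballAvg n f x₀ r| / ‖x - y‖ ^ ((n : ℝ) - 1))
          ≤ ENNReal.ofReal (∑ j ∈ Finset.range (J+1),
              uterm n α r ((campanato1Norm n α f).toReal) j) := master hn hloc hf hr hx J h1
        _ ≤ _ := ENNReal.ofReal_le_ofReal
              (sum_u_neg hα hr hrt ENNReal.toReal_nonneg J h2)
  · -- α = 0
    subst hα
    refine ⟨6 * 2 ^ n * 2 ^ n * ωn n, by positivity, ?_⟩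
    intro f hloc hf x₀ x r t hr hx hrt
    refine ⟨fun h => absurd h (by linarith), fun _ => ?_, fun h => absurd h (by linarith)⟩
    obtain ⟨J, h1, h2, h3⟩ := J_exists hr hrt
    calc ∫⁻ y in {y : EuclideanSpace ℝ (Fin n) | 8 * r ≤ ‖x - y‖ ∧ ‖x - y‖ < t},
          ENNReal.ofReal (|f y - ballAvg n f x₀ r| / ‖x - y‖ ^ ((n : ℝ) - 1))
        ≤ ENNReal.ofReal (∑ j ∈ Finset.range (J+1),
            uterm n 0 r ((campanato1Norm n 0 f).toReal) j) := master hn hloc hf hr hx J h1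
      _ ≤ _ := ENNReal.ofReal_le_ofReal
            (sum_u_zero hr hrt ENNReal.toReal_nonneg J h2 h3)
  · -- 0 < α
    have hq1 : 1 < (2:ℝ) ^ α :=
      Real.one_lt_rpow_iff_of_pos (by norm_num) |>.mpr (Or.inl ⟨by norm_num, hα⟩)
    have hCqpos : (0:ℝ) < ((2:ℝ) ^ α - 1)⁻¹ := by apply inv_pos.mpr; linarith
    have hωe : (0:ℝ) < (ωn n) ^ (1 + α/(n:ℝ)) := Real.rpow_pos_of_pos hω _
    have h2α : (0:ℝ) < (2:ℝ) ^ α := by linarith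
    have h21α : (0:ℝ) < (2:ℝ) ^ (1+α) := Real.rpow_pos_of_pos (by norm_num) _
    refine ⟨2 ^ n * (ωn n) ^ (1 + α/(n:ℝ)) * (1 + 2 ^ n * (2:ℝ) ^ α * ((2:ℝ) ^ α - 1)⁻¹) *
        (2:ℝ) ^ α * (2:ℝ) ^ (1+α), ?_, ?_⟩
    · positivity
    · intro f hloc hf x₀ x r t hr hx hrt
      refine ⟨fun h => absurd h (by linarith), fun h => absurd h (by linarith), fun _ => ?_⟩
      obtain ⟨J, h1, h2, _⟩ := J_exists hr hrt
      calc ∫⁻ y in {y : EuclideanSpace ℝ (Fin n) | 8 * r ≤ ‖x - y‖ ∧ ‖x - y‖ < t},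
            ENNReal.ofReal (|f y - ballAvg n f x₀ r| / ‖x - y‖ ^ ((n : ℝ) - 1))
          ≤ ENNReal.ofReal (∑ j ∈ Finset.range (J+1),
              uterm n α r ((campanato1Norm n α f).toReal) j) := master hn hloc hf hr hx J h1
        _ ≤ _ := ENNReal.ofReal_le_ofReal
              (sum_u_pos hα hr hrt ENNReal.toReal_nonneg J h2)
end

section
/- Let n, m ≥ 1, 0 < β ≤ 1, α ≤ 1, γ < β, and assume additionally α + γ < β in the case 0 < α ≤ 1. Let α = α₁+⋯+α_m where either (i) α₁,…,α_m < 0 and α < 0, or (ii) α₁ = ⋯ = α_m = 0 and α = 0, or (iii) α₁,…,α_m > 0 and α > 0. Let f₁,…,f_m : ℝⁿ → ℝ be locally integrable with finite Campanato norms ‖f_i‖_{E^{α_i,1}}. Let B = B(x₀,r) be a ball and x ∈ B. Then ∫ over the complement of B(x,8r)^m in (ℝⁿ)^m of r^β ∏_{i=1}^m |f_i(y_i) − (f_i)_B| / (Σ_{j=1}^m |x−y_j|)^{mn+β−γ} dy⃗ ≤ c r^{α+γ} ∏_{i=1}^m ‖f_i‖_{E^{α_i,1}}, with c independent of f⃗,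 B, x and r. -/
open MeasureTheory Metric ENNReal

lemma lintegral_pi_prod' {X : Type*} [MeasurableSpace X] (μ : Measure X) [SigmaFinite μ] :
    ∀ (m : ℕ) (g : Fin m → X → ℝ≥0∞), (∀ i, Measurable (g i)) →
    ∫⁻ y : Fin m → X, ∏ i, g i (y i) ∂(Measure.pi fun _ => μ) = ∏ i, ∫⁻ x, g i x ∂μ := by
  intro m
  induction m with
  | zero => intro g hg; simp
  | succ k ih =>
    intro g hg
    have hmp := MeasureTheory.measurePreserving_piFinSuccAbove
      (fun _ : Fin (k+1) => μ) 0
    set e := MeasurableEquiv.piFinSuccAbove (fun _ : Fin (k+1) => X) 0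
    have hF : Measurable fun z : X × (Fin k → X) =>
        g 0 z.1 * ∏ j, g (Fin.succ j) (z.2 j) := by
      refine Measurable.mul ((hg 0).comp measurable_fst) ?_
      exact Finset.measurable_prod _ fun j _ =>
        (hg _).comp ((measurable_pi_apply j).comp measurable_snd)
    have key : ∫⁻ y : Fin (k+1) → X,
        (fun z : X × (Fin k → X) => g 0 z.1 * ∏ j, g (Fin.succ j) (z.2 j)) (e y)
          ∂(Measure.pi fun _ => μ)
        = ∫⁻ z, g 0 z.1 * ∏ j, g (Fin.succ j) (z.2 j)
            ∂(μ.prod (Measure.pi fun _ : Fin k => μ)) := hmp.lintegral_comp hF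
    have heq : ∀ y : Fin (k+1) → X,
        (∏ i, g i (y i)) =
        (fun z : X × (Fin k → X) => g 0 z.1 * ∏ j, g (Fin.succ j) (z.2 j)) (e y) := by
      intro y
      rw [Fin.prod_univ_succ]
      simp [e, MeasurableEquiv.piFinSuccAbove, Fin.succAbove_zero, Fin.tail]
    calc ∫⁻ y : Fin (k+1) → X, ∏ i, g i (y i) ∂(Measure.pi fun _ => μ)
        = ∫⁻ z, g 0 z.1 * ∏ j, g (Fin.succ j) (z.2 j)
            ∂(μ.prod (Measure.pi fun _ : Fin k => μ)) := by
          rw [← key]; exact lintegral_congr fun y => heq y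
      _ = (∫⁻ x, g 0 x ∂μ) * ∫⁻ v : Fin k → X, ∏ j, g (Fin.succ j) (v j)
            ∂(Measure.pi fun _ => μ) := by
          exact lintegral_prod_mul (hg 0).aemeasurable
            (Finset.measurable_prod _ fun j _ =>
              (hg _).comp (measurable_pi_apply j)).aemeasurable
      _ = ∏ i, ∫⁻ x, g i x ∂μ := by
          rw [ih _ fun j => hg _, Fin.prod_univ_succ]

lemma restrict_pi_pi {X : Type*} [MeasurableSpace X] (μ : Measure X) [SigmaFinite μ]
    (m : ℕ) (s : Set X) (hs : MeasurableSet s) :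
    (Measure.pi fun _ : Fin m => μ).restrict (Set.univ.pi fun _ => s)
      = Measure.pi fun _ : Fin m => μ.restrict s := by
  refine (Measure.pi_eq (μ := fun _ : Fin m => μ.restrict s) fun t ht => ?_).symm
  rw [Measure.restrict_apply (MeasurableSet.univ_pi ht)]
  rw [← Set.pi_inter_distrib, Measure.pi_pi]
  simp_rw [Measure.restrict_apply (ht _)]


lemma vol_cb_toReal {n : ℕ} (c : EuclideanSpace ℝ (Fin n)) {ρ : ℝ} (hρ : 0 ≤ ρ) :
    (volume (closedBall c ρ)).toReal
      = ρ ^ n * (volume (closedBall (0 : EuclideanSpace ℝ (Fin n)) 1)).toReal := by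
  rw [Measure.addHaar_closedBall' volume c hρ, ENNReal.toReal_mul,
    ENNReal.toReal_ofReal (pow_nonneg hρ _), finrank_euclideanSpace_fin]

lemma vol_cb_pos {n : ℕ} (c : EuclideanSpace ℝ (Fin n)) {ρ : ℝ} (hρ : 0 < ρ) :
    0 < (volume (closedBall c ρ)).toReal := by
  refine ENNReal.toReal_pos ?_ measure_closedBall_lt_top.ne
  exact (measure_closedBall_pos volume c hρ).ne'

lemma unit_vol_pos (n : ℕ) :
    0 < (volume (closedBall (0 : EuclideanSpace ℝ (Fin n)) 1)).toReal :=
  vol_cb_pos _ one_pos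

section
variable {n : ℕ} {f : EuclideanSpace ℝ (Fin n) → ℝ} {a : ℝ}

/-- Campanato control of mean deviation on a ball. -/
lemma camp_le (hfin : campanato1Norm n a f ≠ ⊤) (c : EuclideanSpace ℝ (Fin n))
    {R : ℝ} (hR : 0 < R) :
    ∫ y in closedBall c R, |f y - ballAvg n f c R| ≤
      (campanato1Norm n a f).toReal * (volume (closedBall c R)).toReal ^ (1 + a / n) := by
  set V := (volume (closedBall c R)).toReal with hV
  have hVpos : 0 < V := vol_cb_pos c hR
  set I := ∫ y in closedBall c R, |f y - ballAvg n f c R| with hI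
  have h1 : ENNReal.ofReal (V ^ (-(a / n)) * (V⁻¹ * I)) ≤ campanato1Norm n a f := by
    refine le_iSup_of_le c (le_iSup_of_le R ?_)
    exact le_iSup_of_le hR le_rfl
  have h2 : V ^ (-(a / n)) * (V⁻¹ * I) ≤ (campanato1Norm n a f).toReal :=
    (ENNReal.ofReal_le_iff_le_toReal hfin).mp h1
  have h3 : I = V ^ (1 + a / n) * (V ^ (-(a / n)) * (V⁻¹ * I)) := by
    have : V ^ (1 + a / n) * V ^ (-(a / n)) = V := by
      rw [← Real.rpow_add hVpos]
      norm_num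
    rw [← mul_assoc, this, ← mul_assoc, mul_inv_cancel₀ hVpos.ne', one_mul]
  calc I = V ^ (1 + a / n) * (V ^ (-(a / n)) * (V⁻¹ * I)) := h3
    _ ≤ V ^ (1 + a / n) * (campanato1Norm n a f).toReal :=
        mul_le_mul_of_nonneg_left h2 (Real.rpow_nonneg hVpos.le _)
    _ = _ := mul_comm _ _

/-- Average difference via containment. -/
lemma avg_sub_avg (hf : LocallyIntegrable f volume) {c c' : EuclideanSpace ℝ (Fin n)}
    {ρ ρ' : ℝ} (hρ : 0 < ρ) (hρ' : 0 < ρ')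
    (hsub : closedBall c ρ ⊆ closedBall c' ρ') :
    |ballAvg n f c ρ - ballAvg n f c' ρ'| ≤
      (volume (closedBall c ρ)).toReal⁻¹ *
        ∫ y in closedBall c' ρ', |f y - ballAvg n f c' ρ'| := by
  set V := (volume (closedBall c ρ)).toReal with hVdef
  have hVpos : 0 < V := vol_cb_pos c hρ
  set A' := ballAvg n f c' ρ' with hA'
  have hint : IntegrableOn f (closedBall c ρ) volume :=
    hf.integrableOn_isCompact (isCompact_closedBall c ρ)
  have hint' : IntegrableOn f (closedBall c' ρ') volume :=
    hf.integrableOn_isCompact (isCompact_closedBall c' ρ')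
  have hsubint : IntegrableOn (fun y => |f y - A'|) (closedBall c' ρ') volume :=
    (hint'.sub (integrableOn_const measure_closedBall_lt_top.ne)).abs
  have key : ballAvg n f c ρ - A' = V⁻¹ * ∫ y in closedBall c ρ, (f y - A') := by
    rw [integral_sub hint (integrableOn_const measure_closedBall_lt_top.ne)]
    rw [setIntegral_const, measureReal_def, smul_eq_mul, mul_sub, ballAvg]
    rw [← mul_assoc, inv_mul_cancel₀ hVpos.ne', one_mul]
  rw [key, abs_mul, abs_inv, abs_of_pos hVpos]
  refine mul_le_mul_of_nonneg_left ?_ (inv_nonneg.mpr hVpos.le)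
  calc |∫ y in closedBall c ρ, (f y - A')| ≤ ∫ y in closedBall c ρ, |f y - A'| := by
        simpa using
          (norm_integral_le_integral_norm (μ := volume.restrict (closedBall c ρ))
            (fun y => f y - A'))
    _ ≤ ∫ y in closedBall c' ρ', |f y - A'| := by
        refine setIntegral_mono_set hsubint ?_ (HasSubset.Subset.eventuallyLE hsub)
        exact Filter.Eventually.of_forall fun y => abs_nonneg _
end
section
variable {n : ℕ} {f : EuclideanSpace ℝ (Fin n) → ℝ} {a : ℝ}

lemma rpow_vol_alg (hn : 0 < n) {V₁ ρ' : ℝ} (hV₁ : 0 < V₁) (hρ' : 0 < ρ') :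
    (ρ' ^ n * V₁) ^ (1 + a / n) = ρ' ^ n * V₁ * (V₁ ^ (a / n) * ρ' ^ a) := by
  have hX : (0:ℝ) < ρ' ^ n * V₁ := mul_pos (pow_pos hρ' n) hV₁
  rw [Real.rpow_add hX, Real.rpow_one]
  congr 1
  rw [Real.mul_rpow (pow_pos hρ' n).le hV₁.le, mul_comm]
  congr 1
  rw [← Real.rpow_natCast ρ' n, ← Real.rpow_mul hρ'.le]
  congr 1
  field_simp
end
section
variable {n : ℕ} {f : EuclideanSpace ℝ (Fin n) → ℝ} {a : ℝ}

lemma avg_diff_bound (hn : 0 < n) (hf : LocallyIntegrable f volume)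
    (hfin : campanato1Norm n a f ≠ ⊤) {c c' : EuclideanSpace ℝ (Fin n)}
    {ρ ρ' : ℝ} (hρ : 0 < ρ) (hρ' : 0 < ρ')
    (hsub : closedBall c ρ ⊆ closedBall c' ρ') :
    |ballAvg n f c ρ - ballAvg n f c' ρ'| ≤
      (campanato1Norm n a f).toReal * ((ρ' / ρ) ^ n *
        ((volume (closedBall (0 : EuclideanSpace ℝ (Fin n)) 1)).toReal ^ (a / n) * ρ' ^ a)) := by
  set V₁ := (volume (closedBall (0 : EuclideanSpace ℝ (Fin n)) 1)).toReal with hV₁def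
  have hV₁ : 0 < V₁ := unit_vol_pos n
  set K := (campanato1Norm n a f).toReal with hK
  have hKnn : 0 ≤ K := ENNReal.toReal_nonneg
  calc |ballAvg n f c ρ - ballAvg n f c' ρ'|
      ≤ (volume (closedBall c ρ)).toReal⁻¹ *
          ∫ y in closedBall c' ρ', |f y - ballAvg n f c' ρ'| :=
        avg_sub_avg hf hρ hρ' hsub
    _ ≤ (volume (closedBall c ρ)).toReal⁻¹ *
          (K * (volume (closedBall c' ρ')).toReal ^ (1 + a / n)) := by
        refine mul_le_mul_of_nonneg_left (camp_le hfin c' hρ') ?_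
        exact inv_nonneg.mpr ENNReal.toReal_nonneg
    _ = K * ((ρ' / ρ) ^ n * (V₁ ^ (a / n) * ρ' ^ a)) := by
        rw [vol_cb_toReal c hρ.le, vol_cb_toReal c' hρ'.le, ← hV₁def,
          rpow_vol_alg hn hV₁ hρ']
        rw [div_pow]
        field_simp

lemma avg_chain (hn : 0 < n) (hf : LocallyIntegrable f volume)
    (hfin : campanato1Norm n a f ≠ ⊤) {x₀ x : EuclideanSpace ℝ (Fin n)} {r : ℝ}
    (hr : 0 < r) (hx : x ∈ closedBall x₀ r) (N : ℕ) :
    |ballAvg n f x (2 ^ N * (2 * r)) - ballAvg n f x₀ r| ≤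
      (campanato1Norm n a f).toReal * (2 ^ n *
        ((volume (closedBall (0 : EuclideanSpace ℝ (Fin n)) 1)).toReal ^ (a / n) *
          ∑ j ∈ Finset.range (N + 1), (2 ^ j * (2 * r)) ^ a)) := by
  set V₁ := (volume (closedBall (0 : EuclideanSpace ℝ (Fin n)) 1)).toReal with hV₁def
  have hV₁ : 0 < V₁ := unit_vol_pos n
  set K := (campanato1Norm n a f).toReal with hK
  have hKnn : 0 ≤ K := ENNReal.toReal_nonneg
  have hsub0 : closedBall x₀ r ⊆ closedBall x (2 * r) := by
    intro y hy
    have h1 : dist y x₀ ≤ r := mem_closedBall.mp hy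
    have h2 : dist x x₀ ≤ r := mem_closedBall.mp hx
    have : dist y x ≤ dist y x₀ + dist x₀ x := dist_triangle y x₀ x
    rw [dist_comm x₀ x] at this
    exact mem_closedBall.mpr (by linarith)
  induction N with
  | zero =>
    have h := avg_diff_bound (a := a) hn hf hfin hr (by linarith : (0:ℝ) < 2 * r) hsub0
    have h2r : (2 * r) / r = 2 := by field_simp
    rw [h2r] at h
    rw [abs_sub_comm] at h
    simpa using h
  | succ N ih =>
    have hρN : (0:ℝ) < 2 ^ N * (2 * r) := by positivity
    have hρN1 : (0:ℝ) < 2 ^ (N + 1) * (2 * r) := by positivity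
    have hsubN : closedBall x (2 ^ N * (2 * r)) ⊆ closedBall x (2 ^ (N+1) * (2 * r)) := by
      apply closedBall_subset_closedBall
      have : (2:ℝ) ^ N ≤ 2 ^ (N + 1) := by
        apply pow_le_pow_right₀ one_le_two (Nat.le_succ N)
      nlinarith
    have hstep := avg_diff_bound (a := a) hn hf hfin hρN hρN1 hsubN
    have hratio : (2 ^ (N+1) * (2 * r)) / (2 ^ N * (2 * r)) = (2:ℝ) := by
      rw [pow_succ]
      rw [div_eq_iff (by positivity : (2:ℝ) ^ N * (2 * r) ≠ 0)]
      ring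
    rw [hratio] at hstep
    rw [abs_sub_comm] at hstep
    have htri : |ballAvg n f x (2 ^ (N+1) * (2 * r)) - ballAvg n f x₀ r| ≤
        |ballAvg n f x (2 ^ (N+1) * (2 * r)) - ballAvg n f x (2 ^ N * (2 * r))| +
        |ballAvg n f x (2 ^ N * (2 * r)) - ballAvg n f x₀ r| := abs_sub_le _ _ _
    rw [Finset.sum_range_succ]
    calc |ballAvg n f x (2 ^ (N+1) * (2 * r)) - ballAvg n f x₀ r|
        ≤ K * (2 ^ n * (V₁ ^ (a / n) * (2 ^ (N+1) * (2 * r)) ^ a)) +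
          K * (2 ^ n * (V₁ ^ (a / n) * ∑ j ∈ Finset.range (N + 1), (2 ^ j * (2 * r)) ^ a)) := by
          refine htri.trans (add_le_add hstep ih)
      _ = K * (2 ^ n * (V₁ ^ (a / n) *
            ((∑ j ∈ Finset.range (N + 1), (2 ^ j * (2 * r)) ^ a) +
              (2 ^ (N+1) * (2 * r)) ^ a))) := by ring
end
section
variable {n : ℕ} {f : EuclideanSpace ℝ (Fin n) → ℝ} {a : ℝ}

lemma dev_int_bound (hn : 0 < n) (hf : LocallyIntegrable f volume)
    (hfin : campanato1Norm n a f ≠ ⊤) {x₀ x : EuclideanSpace ℝ (Fin n)} {r : ℝ}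
    (hr : 0 < r) (hx : x ∈ closedBall x₀ r) (N : ℕ) :
    ∫ y in closedBall x (2 ^ N * (2 * r)), |f y - ballAvg n f x₀ r| ≤
      (campanato1Norm n a f).toReal *
        ((volume (closedBall (0 : EuclideanSpace ℝ (Fin n)) 1)).toReal ^ (1 + a / n) *
          ((2 ^ N * (2 * r)) ^ n *
            ((2 ^ N * (2 * r)) ^ a +
              2 ^ n * ∑ j ∈ Finset.range (N + 1), (2 ^ j * (2 * r)) ^ a))) := by
  set V₁ := (volume (closedBall (0 : EuclideanSpace ℝ (Fin n)) 1)).toReal with hV₁def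
  have hV₁ : 0 < V₁ := unit_vol_pos n
  set K := (campanato1Norm n a f).toReal with hK
  have hKnn : 0 ≤ K := ENNReal.toReal_nonneg
  set ρ := 2 ^ N * (2 * r) with hρdef
  have hρ : 0 < ρ := by positivity
  set B := closedBall x ρ with hB
  set AN := ballAvg n f x ρ with hAN
  set A0 := ballAvg n f x₀ r with hA0
  have hint : IntegrableOn f B volume := hf.integrableOn_isCompact (isCompact_closedBall x ρ)
  have hintc : ∀ C : ℝ, IntegrableOn (fun _ => C) B volume :=
    fun C => integrableOn_const measure_closedBall_lt_top.ne
  have hgint : IntegrableOn (fun y => |f y - AN|) B volume := (hint.sub (hintc AN)).abs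
  have hg0int : IntegrableOn (fun y => |f y - A0|) B volume := (hint.sub (hintc A0)).abs
  have hint1 : IntegrableOn (fun y => |f y - AN| + |AN - A0|) B volume :=
    (hgint.add (hintc _))
  have step1 : ∫ y in B, |f y - A0| ≤ (∫ y in B, |f y - AN|) + (volume B).toReal * |AN - A0| := by
    have hmono : ∫ y in B, |f y - A0| ≤ ∫ y in B, (|f y - AN| + |AN - A0|) := by
      refine setIntegral_mono hg0int hint1 fun y => abs_sub_le _ _ _
    rw [integral_add hgint (hintc _)] at hmono
    rw [setIntegral_const, smul_eq_mul] at hmono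
    exact hmono
  have step2 : ∫ y in B, |f y - AN| ≤ K * (V₁ ^ (1 + a / n) * (ρ ^ n * ρ ^ a)) := by
    have h := camp_le (a := a) hfin x hρ
    rw [vol_cb_toReal x hρ.le, ← hV₁def] at h
    calc ∫ y in B, |f y - AN| ≤ K * (ρ ^ n * V₁) ^ (1 + a / n) := h
      _ = K * (V₁ ^ (1 + a / n) * (ρ ^ n * ρ ^ a)) := by
          rw [rpow_vol_alg hn hV₁ hρ, Real.rpow_add hV₁, Real.rpow_one]
          ring
  have step3 : (volume B).toReal * |AN - A0| ≤
      K * (V₁ ^ (1 + a / n) * (ρ ^ n *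
        (2 ^ n * ∑ j ∈ Finset.range (N + 1), (2 ^ j * (2 * r)) ^ a))) := by
    have h := avg_chain (a := a) hn hf hfin hr hx N
    rw [hB, vol_cb_toReal x hρ.le, ← hV₁def]
    calc (ρ ^ n * V₁) * |AN - A0|
        ≤ (ρ ^ n * V₁) * (K * (2 ^ n * (V₁ ^ (a / n) *
            ∑ j ∈ Finset.range (N + 1), (2 ^ j * (2 * r)) ^ a))) := by
          refine mul_le_mul_of_nonneg_left h (by positivity)
      _ = K * ((V₁ * V₁ ^ (a / n)) * (ρ ^ n *
            (2 ^ n * ∑ j ∈ Finset.range (N + 1), (2 ^ j * (2 * r)) ^ a))) := by ring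
      _ = K * (V₁ ^ (1 + a / n) * (ρ ^ n *
            (2 ^ n * ∑ j ∈ Finset.range (N + 1), (2 ^ j * (2 * r)) ^ a))) := by
          rw [Real.rpow_add hV₁, Real.rpow_one]
  calc ∫ y in B, |f y - A0| ≤ (∫ y in B, |f y - AN|) + (volume B).toReal * |AN - A0| := step1
    _ ≤ K * (V₁ ^ (1 + a / n) * (ρ ^ n * ρ ^ a)) +
        K * (V₁ ^ (1 + a / n) * (ρ ^ n *
          (2 ^ n * ∑ j ∈ Finset.range (N + 1), (2 ^ j * (2 * r)) ^ a))) := add_le_add step2 step3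
    _ = _ := by ring
end
lemma pow_rpow' {x : ℝ} (hx : 0 ≤ x) (k : ℕ) (y : ℝ) : (x ^ k) ^ y = x ^ (y * k) := by
  rw [← Real.rpow_natCast x k, ← Real.rpow_mul hx, mul_comm]

lemma rpow_finset_sum {x : ℝ} (hx : 0 < x) {ι : Type*} (s : Finset ι) (f : ι → ℝ) :
    x ^ (∑ i ∈ s, f i) = ∏ i ∈ s, x ^ f i := by
  classical
  induction s using Finset.cons_induction with
  | empty => simp
  | cons i s his ih => rw [Finset.sum_cons, Finset.prod_cons, Real.rpow_add hx, ih]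

lemma G_bound (n : ℕ) (a : ℝ) {r : ℝ} (hr : 0 < r) (N : ℕ) :
    (2 ^ N * (2 * r)) ^ a + 2 ^ n * ∑ j ∈ Finset.range (N + 1), (2 ^ j * (2 * r)) ^ a ≤
      (1 + 2 ^ n) * (2:ℝ) ^ (max a 0) * (((N:ℝ) + 2) * (((2:ℝ) ^ (max a 0)) ^ N * r ^ a)) := by
  set q' := (2:ℝ) ^ (max a 0) with hq'def
  have hq'1 : 1 ≤ q' := by
    rw [hq'def, ← Real.rpow_zero 2]
    exact Real.rpow_le_rpow_of_exponent_le one_le_two (le_max_right a 0)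
  have hra : 0 < r ^ a := Real.rpow_pos_of_pos hr a
  have hterm : ∀ j : ℕ, j ≤ N → ((2:ℝ) ^ j * (2 * r)) ^ a ≤ q' ^ (N + 1) * r ^ a := by
    intro j hj
    have h1 : ((2:ℝ) ^ j * (2 * r)) = 2 ^ (j + 1) * r := by ring
    rw [h1, Real.mul_rpow (by positivity) hr.le, pow_rpow' (by norm_num : (0:ℝ) ≤ 2)]
    refine mul_le_mul_of_nonneg_right ?_ hra.le
    calc (2:ℝ) ^ (a * (j + 1 : ℕ)) = ((2:ℝ) ^ a) ^ (j + 1) := by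
          rw [← Real.rpow_natCast ((2:ℝ) ^ a) (j+1), ← Real.rpow_mul (by norm_num : (0:ℝ) ≤ 2)]
      _ ≤ q' ^ (j + 1) := by
          refine pow_le_pow_left₀ (Real.rpow_pos_of_pos two_pos a).le ?_ _
          exact Real.rpow_le_rpow_of_exponent_le one_le_two (le_max_left a 0)
      _ ≤ q' ^ (N + 1) := pow_le_pow_right₀ hq'1 (by omega)
  have hsum : ∑ j ∈ Finset.range (N + 1), ((2:ℝ) ^ j * (2 * r)) ^ a ≤
      ((N:ℝ) + 1) * (q' ^ (N + 1) * r ^ a) := by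
    calc ∑ j ∈ Finset.range (N + 1), ((2:ℝ) ^ j * (2 * r)) ^ a
        ≤ ∑ _j ∈ Finset.range (N + 1), q' ^ (N + 1) * r ^ a := by
          refine Finset.sum_le_sum fun j hj => hterm j ?_
          exact Nat.lt_succ_iff.mp (Finset.mem_range.mp hj)
      _ = ((N:ℝ) + 1) * (q' ^ (N + 1) * r ^ a) := by
          rw [Finset.sum_const, Finset.card_range]
          push_cast; ring
  have hfirst : ((2:ℝ) ^ N * (2 * r)) ^ a ≤ q' ^ (N + 1) * r ^ a := hterm N le_rfl
  have hP : (0:ℝ) < q' ^ (N + 1) * r ^ a := by positivity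
  have h2n : (1:ℝ) ≤ 2 ^ n := one_le_pow₀ one_le_two
  calc (2 ^ N * (2 * r)) ^ a + 2 ^ n * ∑ j ∈ Finset.range (N + 1), (2 ^ j * (2 * r)) ^ a
      ≤ q' ^ (N + 1) * r ^ a + 2 ^ n * (((N:ℝ) + 1) * (q' ^ (N + 1) * r ^ a)) := by
        refine add_le_add hfirst (mul_le_mul_of_nonneg_left hsum (by positivity))
    _ ≤ (1 + 2 ^ n) * (((N:ℝ) + 2) * (q' ^ (N + 1) * r ^ a)) := by nlinarith [hP, h2n]
    _ = (1 + 2 ^ n) * q' * (((N:ℝ) + 2) * (q' ^ N * r ^ a)) := by ring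
lemma merge2r {r : ℝ} (hr : 0 < r) (a b c d : ℝ) :
    ((2:ℝ) ^ a * r ^ b) * ((2:ℝ) ^ c * r ^ d) = 2 ^ (a + c) * r ^ (b + d) := by
  rw [Real.rpow_add two_pos, Real.rpow_add hr]; ring

lemma core_algebra (n m : ℕ) (β γ Ap Ah : ℝ) {r : ℝ} (hr : 0 < r) (k : ℕ) :
    r ^ β / ((2:ℝ) ^ k * (8 * r)) ^ ((m:ℝ) * (n:ℝ) + β - γ) *
      ((((2:ℝ) ^ (k + 3) * (2 * r)) ^ n) ^ m * (((2:ℝ) ^ Ap) ^ (k + 3) * r ^ Ah)) =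
    (8:ℝ) ^ (-((m:ℝ) * (n:ℝ) + β - γ)) * 16 ^ (n * m) * ((2:ℝ) ^ Ap) ^ 3 *
      (r ^ (Ah + γ) * ((2:ℝ) ^ (γ - β + Ap)) ^ k) := by
  set p : ℝ := (m:ℝ) * (n:ℝ) + β - γ with hp
  -- convert each factor to the canonical form 2 ^ (·) * r ^ (·)
  have f2 : ((2:ℝ) ^ k * (8 * r)) ^ p = 2 ^ (p * (k + 3 : ℕ)) * r ^ p := by
    rw [show (2:ℝ) ^ k * (8 * r) = 2 ^ (k + 3) * r by ring,
      Real.mul_rpow (by positivity) hr.le, pow_rpow' (by norm_num : (0:ℝ) ≤ 2)]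
  have f3 : (((2:ℝ) ^ (k + 3) * (2 * r)) ^ n) ^ m
      = 2 ^ ((((k + 4) * (n * m) : ℕ) : ℝ)) * r ^ (((n * m : ℕ) : ℝ)) := by
    rw [Real.rpow_natCast, Real.rpow_natCast,
      show ((2:ℝ) ^ (k + 3) * (2 * r)) = 2 ^ (k + 4) * r by ring]
    rw [← pow_mul, mul_pow, ← pow_mul]
  have f4 : ((2:ℝ) ^ Ap) ^ (k + 3) = 2 ^ (Ap * ((k + 3 : ℕ) : ℝ)) := by
    rw [← Real.rpow_natCast ((2:ℝ) ^ Ap) (k + 3), ← Real.rpow_mul (by norm_num : (0:ℝ) ≤ 2)]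
  have g1 : (8:ℝ) ^ (-p) = 2 ^ ((-p) * (3:ℕ)) := by
    rw [show (8:ℝ) = 2 ^ (3:ℕ) by norm_num, pow_rpow' (by norm_num : (0:ℝ) ≤ 2)]
  have g2 : (16:ℝ) ^ (n * m) = 2 ^ (((4 * (n * m) : ℕ) : ℝ)) := by
    rw [Real.rpow_natCast, show (16:ℝ) = 2 ^ (4:ℕ) by norm_num, ← pow_mul]
  have g3 : ((2:ℝ) ^ Ap) ^ (3:ℕ) = 2 ^ (Ap * ((3:ℕ) : ℝ)) := by
    rw [← Real.rpow_natCast ((2:ℝ) ^ Ap) 3, ← Real.rpow_mul (by norm_num : (0:ℝ) ≤ 2)]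
  have g5 : ((2:ℝ) ^ (γ - β + Ap)) ^ k = 2 ^ ((γ - β + Ap) * (k : ℝ)) := by
    rw [← Real.rpow_natCast ((2:ℝ) ^ (γ - β + Ap)) k, ← Real.rpow_mul (by norm_num : (0:ℝ) ≤ 2)]
  have hne : ((2:ℝ) ^ (p * ((k + 3 : ℕ) : ℝ)) * r ^ p) ≠ 0 := by positivity
  rw [div_eq_mul_inv, f2, f3, f4, g1, g2, g3, g5, mul_inv,
    ← Real.rpow_neg (by norm_num : (0:ℝ) ≤ 2), ← Real.rpow_neg hr.le]
  calc r ^ β * ((2:ℝ) ^ (-(p * ((k+3:ℕ):ℝ))) * r ^ (-p)) *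
        (2 ^ ((((k + 4) * (n * m) : ℕ) : ℝ)) * r ^ (((n * m : ℕ) : ℝ)) *
          (2 ^ (Ap * ((k + 3 : ℕ) : ℝ)) * r ^ Ah))
      = ((2:ℝ) ^ (0:ℝ) * r ^ β) * ((2:ℝ) ^ (-(p * ((k+3:ℕ):ℝ))) * r ^ (-p)) *
        ((2 ^ ((((k + 4) * (n * m) : ℕ) : ℝ)) * r ^ (((n * m : ℕ) : ℝ))) *
          ((2 ^ (Ap * ((k + 3 : ℕ) : ℝ)) * r ^ Ah))) := by
        rw [Real.rpow_zero]; ring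
    _ = 2 ^ ((0 + -(p * ((k+3:ℕ):ℝ))) + ((((k + 4) * (n * m) : ℕ) : ℝ) + Ap * ((k + 3 : ℕ) : ℝ)))
        * r ^ ((β + -p) + ((((n * m) : ℕ) : ℝ) + Ah)) := by
        rw [merge2r hr, merge2r hr, merge2r hr]
    _ = 2 ^ ((-p * ((3:ℕ):ℝ) + (((4 * (n * m) : ℕ)):ℝ) + Ap * ((3:ℕ):ℝ))
          + (γ - β + Ap) * (k:ℝ)) * r ^ ((Ah + γ) + 0) := by
        congr 1
        · congr 1
          push_cast [hp]
          ring
        · congr 1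
          push_cast [hp]
          ring
    _ = (2 ^ (-p * ((3:ℕ):ℝ)) * r ^ (0:ℝ)) * (2 ^ ((((4 * (n * m) : ℕ)):ℝ)) * r ^ (0:ℝ)) *
        (2 ^ (Ap * ((3:ℕ):ℝ)) * r ^ (0:ℝ)) * (r ^ (Ah + γ) * 2 ^ ((γ - β + Ap) * (k:ℝ))) := by
        rw [Real.rpow_add two_pos, Real.rpow_add two_pos, Real.rpow_add two_pos,
          Real.rpow_add hr, Real.rpow_zero]
        ring
    _ = 2 ^ (-p * ((3:ℕ):ℝ)) * 2 ^ ((((4 * (n * m) : ℕ)):ℝ)) * 2 ^ (Ap * ((3:ℕ):ℝ)) *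
        (r ^ (Ah + γ) * 2 ^ ((γ - β + Ap) * (k:ℝ))) := by
        rw [Real.rpow_zero]; ring
lemma final_algebra (n m : ℕ) (β γ : ℝ) (α : Fin m → ℝ) (V₁ : ℝ) (K : Fin m → ℝ)
    {r : ℝ} (hr : 0 < r) (k : ℕ) :
    r ^ β / ((2:ℝ) ^ k * (8 * r)) ^ ((m:ℝ) * (n:ℝ) + β - γ) *
      ∏ i, (K i * (V₁ ^ (1 + α i / (n:ℝ)) * (((2:ℝ) ^ (k + 3) * (2 * r)) ^ n *
        ((1 + (2:ℝ) ^ n) * (2:ℝ) ^ (max (α i) 0) *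
          (((k:ℝ) + 5) * (((2:ℝ) ^ (max (α i) 0)) ^ (k + 3) * r ^ (α i)))))))
    = ((8:ℝ) ^ (-((m:ℝ) * (n:ℝ) + β - γ)) * 16 ^ (n * m) *
        (∏ i, V₁ ^ (1 + α i / (n:ℝ))) * (∏ i, (1 + (2:ℝ) ^ n) * (2:ℝ) ^ (max (α i) 0)) *
        ((2:ℝ) ^ (∑ i, max (α i) 0)) ^ 3) *
      (∏ i, K i) * r ^ ((∑ i, α i) + γ) *
      (((k:ℝ) + 5) ^ m * ((2:ℝ) ^ (γ - β + ∑ i, max (α i) 0)) ^ k) := by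
  have hsplit : ∏ i, (K i * (V₁ ^ (1 + α i / (n:ℝ)) * (((2:ℝ) ^ (k + 3) * (2 * r)) ^ n *
        ((1 + (2:ℝ) ^ n) * (2:ℝ) ^ (max (α i) 0) *
          (((k:ℝ) + 5) * (((2:ℝ) ^ (max (α i) 0)) ^ (k + 3) * r ^ (α i)))))))
      = (∏ i, K i) * ((∏ i, V₁ ^ (1 + α i / (n:ℝ))) * ((((2:ℝ) ^ (k + 3) * (2 * r)) ^ n) ^ m *
        ((∏ i, (1 + (2:ℝ) ^ n) * (2:ℝ) ^ (max (α i) 0)) *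
          (((k:ℝ) + 5) ^ m * (((2:ℝ) ^ (∑ i, max (α i) 0)) ^ (k + 3) *
            r ^ (∑ i, α i)))))) := by
    simp only [Finset.prod_mul_distrib, Finset.prod_const, Finset.card_univ, Fintype.card_fin,
      Finset.prod_pow]
    rw [← rpow_finset_sum two_pos, ← rpow_finset_sum hr]
  rw [hsplit]
  have hcore := core_algebra n m β γ (∑ i, max (α i) 0) (∑ i, α i) hr k
  calc r ^ β / ((2:ℝ) ^ k * (8 * r)) ^ ((m:ℝ) * (n:ℝ) + β - γ) *
        ((∏ i, K i) * ((∏ i, V₁ ^ (1 + α i / (n:ℝ))) *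
          ((((2:ℝ) ^ (k + 3) * (2 * r)) ^ n) ^ m *
            ((∏ i, (1 + (2:ℝ) ^ n) * (2:ℝ) ^ (max (α i) 0)) *
              (((k:ℝ) + 5) ^ m * (((2:ℝ) ^ (∑ i, max (α i) 0)) ^ (k + 3) *
                r ^ (∑ i, α i)))))))
      = (r ^ β / ((2:ℝ) ^ k * (8 * r)) ^ ((m:ℝ) * (n:ℝ) + β - γ) *
          ((((2:ℝ) ^ (k + 3) * (2 * r)) ^ n) ^ m *
            (((2:ℝ) ^ (∑ i, max (α i) 0)) ^ (k + 3) * r ^ (∑ i, α i)))) *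
        ((∏ i, K i) * (∏ i, V₁ ^ (1 + α i / (n:ℝ))) *
          (∏ i, (1 + (2:ℝ) ^ n) * (2:ℝ) ^ (max (α i) 0)) * ((k:ℝ) + 5) ^ m) := by ring
    _ = ((8:ℝ) ^ (-((m:ℝ) * (n:ℝ) + β - γ)) * 16 ^ (n * m) *
          ((2:ℝ) ^ (∑ i, max (α i) 0)) ^ 3 *
          (r ^ ((∑ i, α i) + γ) * ((2:ℝ) ^ (γ - β + ∑ i, max (α i) 0)) ^ k)) *
        ((∏ i, K i) * (∏ i, V₁ ^ (1 + α i / (n:ℝ))) *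
          (∏ i, (1 + (2:ℝ) ^ n) * (2:ℝ) ^ (max (α i) 0)) * ((k:ℝ) + 5) ^ m) := by
        rw [hcore]
    _ = _ := by ring
lemma prod_dev_factor {n m : ℕ} (f : Fin m → EuclideanSpace ℝ (Fin n) → ℝ)
    (hf : ∀ i, LocallyIntegrable (f i) volume) (a : Fin m → ℝ)
    (x : EuclideanSpace ℝ (Fin n)) (ρ : ℝ) :
    ∫⁻ y : Fin m → EuclideanSpace ℝ (Fin n) in Set.univ.pi fun _ => closedBall x ρ,
        ∏ i, ENNReal.ofReal |f i (y i) - a i|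
      = ∏ i, ENNReal.ofReal (∫ z in closedBall x ρ, |f i z - a i|) := by
  have hmeas : ∀ i, AEMeasurable (f i) volume :=
    fun i => (hf i).aestronglyMeasurable.aemeasurable
  set g : Fin m → EuclideanSpace ℝ (Fin n) → ℝ := fun i => (hmeas i).mk (f i) with hgdef
  have hgm : ∀ i, Measurable (g i) := fun i => (hmeas i).measurable_mk
  have hge : ∀ i, f i =ᵐ[(volume : Measure (EuclideanSpace ℝ (Fin n)))] g i :=
    fun i => (hmeas i).ae_eq_mk
  have hrw : (volume : Measure (Fin m → EuclideanSpace ℝ (Fin n))).restrict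
      (Set.univ.pi fun _ => closedBall x ρ)
      = Measure.pi fun _ : Fin m => (volume : Measure (EuclideanSpace ℝ (Fin n))).restrict
          (closedBall x ρ) := by
    rw [volume_pi, restrict_pi_pi _ _ _ measurableSet_closedBall]
  rw [hrw]
  have hae : (fun y : Fin m → EuclideanSpace ℝ (Fin n) => ∏ i, ENNReal.ofReal |f i (y i) - a i|)
      =ᵐ[Measure.pi fun _ : Fin m => (volume : Measure (EuclideanSpace ℝ (Fin n))).restrict
          (closedBall x ρ)]
      fun y => ∏ i, ENNReal.ofReal |g i (y i) - a i| := by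
    have hco : ∀ i, (fun y : Fin m → EuclideanSpace ℝ (Fin n) => f i (y i))
        =ᵐ[Measure.pi fun _ : Fin m => (volume : Measure (EuclideanSpace ℝ (Fin n))).restrict
            (closedBall x ρ)] fun y => g i (y i) := by
      intro i
      have h1 : f i =ᵐ[(volume : Measure (EuclideanSpace ℝ (Fin n))).restrict (closedBall x ρ)]
          g i := ae_restrict_of_ae (hge i)
      exact h1.comp_tendsto Measure.tendsto_eval_ae_ae
    filter_upwards [ae_all_iff.mpr hco] with y hy
    exact Finset.prod_congr rfl fun i _ => by rw [hy i]
  rw [lintegral_congr_ae hae]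
  rw [lintegral_pi_prod' _ m (fun i z => ENNReal.ofReal |g i z - a i|)
    (fun i => (((hgm i).sub measurable_const).abs).ennreal_ofReal)]
  refine Finset.prod_congr rfl fun i _ => ?_
  have hint : IntegrableOn (fun z => |f i z - a i|) (closedBall x ρ) volume :=
    (((hf i).integrableOn_isCompact (isCompact_closedBall x ρ)).sub
      (integrableOn_const measure_closedBall_lt_top.ne)).abs
  have h2 : ∫⁻ z in closedBall x ρ, ENNReal.ofReal |g i z - a i|
      = ∫⁻ z in closedBall x ρ, ENNReal.ofReal |f i z - a i| := by
    refine lintegral_congr_ae ?_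
    filter_upwards [ae_restrict_of_ae (hge i)] with z hz
    rw [hz]
  rw [h2, ← ofReal_integral_eq_lintegral_ofReal hint
    (Filter.Eventually.of_forall fun z => abs_nonneg _)]
lemma cover_lemma {n m : ℕ} (hm : 0 < m) (x : EuclideanSpace ℝ (Fin n)) {r : ℝ} (hr : 0 < r) :
    (Set.univ.pi fun _ : Fin m => closedBall x (8 * r))ᶜ ⊆
      ⋃ k : ℕ, ((Set.univ.pi fun _ : Fin m => closedBall x (2 ^ (k + 1) * (8 * r))) \
        (Set.univ.pi fun _ : Fin m => closedBall x (2 ^ k * (8 * r)))) := by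
  classical
  intro y hy
  haveI : Nonempty (Fin m) := ⟨⟨0, hm⟩⟩
  have hex : ∃ k : ℕ, ∀ i, y i ∈ closedBall x (2 ^ (k + 1) * (8 * r)) := by
    set M := Finset.univ.sup' Finset.univ_nonempty fun i : Fin m => dist (y i) x with hM
    obtain ⟨k, hk⟩ := pow_unbounded_of_one_lt (M / (8 * r)) (one_lt_two (α := ℝ))
    refine ⟨k, fun i => mem_closedBall.mpr ?_⟩
    have h1 : dist (y i) x ≤ M := Finset.le_sup' (fun i : Fin m => dist (y i) x) (Finset.mem_univ i)
    have h2 : M < 2 ^ k * (8 * r) := by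
      rw [div_lt_iff₀ (by positivity)] at hk
      linarith
    have h3 : (2:ℝ) ^ k * (8 * r) ≤ 2 ^ (k + 1) * (8 * r) := by
      have : (2:ℝ) ^ k ≤ 2 ^ (k + 1) := pow_le_pow_right₀ one_le_two (Nat.le_succ k)
      nlinarith
    linarith
  set k0 := Nat.find hex with hk0
  refine Set.mem_iUnion.mpr ⟨k0, ⟨?_, ?_⟩⟩
  · exact Set.mem_univ_pi.mpr (Nat.find_spec hex)
  · intro hmem
    rw [Set.mem_univ_pi] at hmem
    rcases Nat.eq_zero_or_pos k0 with h0 | hpos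
    · refine hy ?_
      refine Set.mem_univ_pi.mpr fun i => ?_
      have := hmem i
      rw [h0] at this
      simpa using this
    · obtain ⟨j, hj⟩ := Nat.exists_eq_add_of_lt hpos
      have hjk : j < k0 := by omega
      refine Nat.find_min hex hjk fun i => ?_
      have := hmem i
      rw [hj] at this
      simpa [add_comm] using this

lemma w_summable (m : ℕ) {Q : ℝ} (hQ0 : 0 < Q) (hQ1 : Q < 1) :
    Summable (fun k : ℕ => ((k:ℝ) + 5) ^ m * Q ^ k) := by
  have hsum0 : Summable (fun j : ℕ => (j:ℝ) ^ m * Q ^ j) :=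
    summable_pow_mul_geometric_of_norm_lt_one m
      (by rw [Real.norm_eq_abs, abs_of_pos hQ0]; exact hQ1)
  have hsum1 : Summable (fun k : ℕ => ((k + 5 : ℕ):ℝ) ^ m * Q ^ (k + 5)) :=
    (summable_nat_add_iff 5).mpr hsum0
  have hsum2 := hsum1.mul_left ((Q ^ 5)⁻¹)
  refine hsum2.congr fun k => ?_
  push_cast
  field_simp
  ring

/-- integral over the complement of B(x,8r)^m of the product of
deviations against the kernel (Σ|x-y_j|)^{mn+β-γ}. -/
theorem stmt8 (n m : ℕ) (hn : 1 ≤ n) (hm : 1 ≤ m)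
    (β γ : ℝ) (hβ0 : 0 < β) (hβ1 : β ≤ 1) (hγ : γ < β)
    (α : Fin m → ℝ) (hαsum : (∑ i, α i) ≤ 1)
    (hcase : 0 < ∑ i, α i → (∑ i, α i) + γ < β)
    (hsign : ((∀ i, α i < 0) ∧ (∑ i, α i) < 0) ∨ (∀ i, α i = 0) ∨
      ((∀ i, 0 < α i) ∧ 0 < ∑ i, α i)) :
    ∃ c > (0 : ℝ), ∀ f : Fin m → EuclideanSpace ℝ (Fin n) → ℝ,
      (∀ i, LocallyIntegrable (f i) volume) →
      (∀ i, campanato1Norm n (α i) (f i) < ⊤) →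
      ∀ (x₀ x : EuclideanSpace ℝ (Fin n)) (r : ℝ), 0 < r → x ∈ closedBall x₀ r →
        ∫⁻ y in (Set.univ.pi fun _ : Fin m => closedBall x (8 * r))ᶜ,
            ENNReal.ofReal (r ^ β * (∏ i, |f i (y i) - ballAvg n (f i) x₀ r|) /
              (∑ j, ‖x - y j‖) ^ ((m : ℝ) * (n : ℝ) + β - γ)) ≤
          ENNReal.ofReal (c * r ^ ((∑ i, α i) + γ) *
            ∏ i, (campanato1Norm n (α i) (f i)).toReal) := by
  classical
  have hn0 : 0 < n := hn
  have hm0 : 0 < m := hm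
  set V₁ := (volume (closedBall (0 : EuclideanSpace ℝ (Fin n)) 1)).toReal with hV₁def
  have hV₁ : 0 < V₁ := unit_vol_pos n
  set pp : ℝ := (m:ℝ) * (n:ℝ) + β - γ with hppdef
  have hmn : (0:ℝ) ≤ (m:ℝ) * (n:ℝ) := by positivity
  have hpp : 0 < pp := by rw [hppdef]; linarith
  set Ah : ℝ := ∑ i, α i with hAh
  set Ap : ℝ := ∑ i, max (α i) 0 with hAp
  have hApval : γ - β + Ap < 0 := by
    rcases hsign with ⟨h1, _⟩ | h1 | ⟨h1, h2⟩
    · have h0 : Ap = 0 := by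
        rw [hAp]; exact Finset.sum_eq_zero fun i _ => max_eq_right (h1 i).le
      rw [h0]; linarith
    · have h0 : Ap = 0 := by
        rw [hAp]; exact Finset.sum_eq_zero fun i _ => by rw [h1 i]; simp
      rw [h0]; linarith
    · have hA : Ap = Ah := by
        rw [hAp, hAh]; exact Finset.sum_congr rfl fun i _ => max_eq_left (h1 i).le
      have h3 := hcase h2
      rw [hA, hAh]; linarith
  set Q : ℝ := (2:ℝ) ^ (γ - β + Ap) with hQ
  have hQ0 : 0 < Q := Real.rpow_pos_of_pos two_pos _
  have hQ1 : Q < 1 := Real.rpow_lt_one_of_one_lt_of_neg one_lt_two hApval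
  set w : ℕ → ℝ := fun k => ((k:ℝ) + 5) ^ m * Q ^ k with hwdef
  have hwnn : ∀ k, 0 ≤ w k := fun k => by simp only [hwdef]; positivity
  have hwsum : Summable w := w_summable m hQ0 hQ1
  set W := ∑' k, w k with hW
  have hW0 : 0 < W := by
    have h0 : w 0 ≤ W := hwsum.le_tsum 0 fun j _ => hwnn j
    have h1 : (0:ℝ) < w 0 := by simp only [hwdef]; positivity
    linarith
  set CONST : ℝ := (8:ℝ) ^ (-pp) * 16 ^ (n * m) * (∏ i, V₁ ^ (1 + α i / (n:ℝ))) *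
    (∏ i, (1 + (2:ℝ) ^ n) * (2:ℝ) ^ (max (α i) 0)) * ((2:ℝ) ^ Ap) ^ 3 with hCONST
  have hprod1 : 0 < ∏ i, V₁ ^ (1 + α i / (n:ℝ)) :=
    Finset.prod_pos fun i _ => Real.rpow_pos_of_pos hV₁ _
  have hprod2 : 0 < ∏ i : Fin m, (1 + (2:ℝ) ^ n) * (2:ℝ) ^ (max (α i) 0) :=
    Finset.prod_pos fun i _ => mul_pos (by positivity) (Real.rpow_pos_of_pos two_pos _)
  have hCONST0 : 0 < CONST := by
    rw [hCONST]
    have h8 : (0:ℝ) < (8:ℝ) ^ (-pp) := Real.rpow_pos_of_pos (by norm_num) _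
    have h2A : (0:ℝ) < ((2:ℝ) ^ Ap) ^ 3 := by positivity
    positivity
  refine ⟨CONST * W, mul_pos hCONST0 hW0, ?_⟩
  intro f hf hfin x₀ x r hr hx
  set K : Fin m → ℝ := fun i => (campanato1Norm n (α i) (f i)).toReal with hK
  have hKnn : ∀ i, 0 ≤ K i := fun i => ENNReal.toReal_nonneg
  have hKprodnn : 0 ≤ ∏ i, K i := Finset.prod_nonneg fun i _ => hKnn i
  set T : ℕ → Set (Fin m → EuclideanSpace ℝ (Fin n)) := fun k =>
    (Set.univ.pi fun _ : Fin m => closedBall x (2 ^ (k + 1) * (8 * r))) \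
      (Set.univ.pi fun _ : Fin m => closedBall x (2 ^ k * (8 * r))) with hT
  have key : ∀ k : ℕ,
      (∫⁻ y in T k, ENNReal.ofReal (r ^ β * (∏ i, |f i (y i) - ballAvg n (f i) x₀ r|) /
        (∑ j, ‖x - y j‖) ^ pp)) ≤
      ENNReal.ofReal (CONST * (∏ i, K i) * r ^ (Ah + γ) * w k) := by
    intro k
    have hRk : (0:ℝ) < 2 ^ k * (8 * r) := by positivity
    have hρ : (0:ℝ) < 2 ^ (k + 3) * (2 * r) := by positivity
    have hρeq : (2:ℝ) ^ (k + 1) * (8 * r) = 2 ^ (k + 3) * (2 * r) := by ring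
    have hcst : (0:ℝ) ≤ r ^ β / (2 ^ k * (8 * r)) ^ pp := by positivity
    have hTm : MeasurableSet (T k) := by
      simp only [hT]
      exact (MeasurableSet.univ_pi fun _ => measurableSet_closedBall).diff
        (MeasurableSet.univ_pi fun _ => measurableSet_closedBall)
    set G : (Fin m → EuclideanSpace ℝ (Fin n)) → ℝ≥0∞ := fun y =>
      ENNReal.ofReal (r ^ β / (2 ^ k * (8 * r)) ^ pp) *
        ∏ i, ENNReal.ofReal |f i (y i) - ballAvg n (f i) x₀ r| with hG
    have hpoint : ∀ y ∈ T k,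
        ENNReal.ofReal (r ^ β * (∏ i, |f i (y i) - ballAvg n (f i) x₀ r|) /
          (∑ j, ‖x - y j‖) ^ pp) ≤ G y := by
      intro y hy
      simp only [hT] at hy
      obtain ⟨hy1, hy2⟩ := hy
      rw [Set.mem_univ_pi] at hy2
      push_neg at hy2
      obtain ⟨j, hj⟩ := hy2
      have hdj : 2 ^ k * (8 * r) < dist (y j) x :=
        lt_of_not_ge fun h => hj (mem_closedBall.mpr h)
      have hsumge : 2 ^ k * (8 * r) ≤ ∑ j', ‖x - y j'‖ := by
        have he : dist (y j) x = ‖x - y j‖ := by rw [dist_comm, dist_eq_norm]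
        have h1 : ‖x - y j‖ ≤ ∑ j', ‖x - y j'‖ :=
          Finset.single_le_sum (f := fun j' => ‖x - y j'‖)
            (fun _ _ => norm_nonneg _) (Finset.mem_univ j)
        rw [he] at hdj
        linarith
      have hfrac : r ^ β * (∏ i, |f i (y i) - ballAvg n (f i) x₀ r|) /
          (∑ j', ‖x - y j'‖) ^ pp ≤
          r ^ β / (2 ^ k * (8 * r)) ^ pp * ∏ i, |f i (y i) - ballAvg n (f i) x₀ r| := by
        rw [div_mul_eq_mul_div]
        have hden : (2 ^ k * (8 * r)) ^ pp ≤ (∑ j', ‖x - y j'‖) ^ pp :=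
          Real.rpow_le_rpow hRk.le hsumge hpp.le
        have hnum : (0:ℝ) ≤ r ^ β * ∏ i, |f i (y i) - ballAvg n (f i) x₀ r| := by
          have : (0:ℝ) ≤ ∏ i, |f i (y i) - ballAvg n (f i) x₀ r| :=
            Finset.prod_nonneg fun i _ => abs_nonneg _
          positivity
        gcongr
      calc ENNReal.ofReal (r ^ β * (∏ i, |f i (y i) - ballAvg n (f i) x₀ r|) /
            (∑ j', ‖x - y j'‖) ^ pp)
          ≤ ENNReal.ofReal (r ^ β / (2 ^ k * (8 * r)) ^ pp *
              ∏ i, |f i (y i) - ballAvg n (f i) x₀ r|) := ENNReal.ofReal_le_ofReal hfrac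
        _ = G y := by
            simp only [hG]
            rw [ENNReal.ofReal_mul hcst,
              ENNReal.ofReal_prod_of_nonneg (fun i _ => abs_nonneg _)]
    have hTsub : T k ⊆ Set.univ.pi fun _ : Fin m => closedBall x (2 ^ (k + 1) * (8 * r)) := by
      simp only [hT]
      exact Set.diff_subset
    have hJ : ∀ i : Fin m,
        ∫ z in closedBall x (2 ^ (k + 3) * (2 * r)), |f i z - ballAvg n (f i) x₀ r| ≤
        K i * (V₁ ^ (1 + α i / (n:ℝ)) * (((2:ℝ) ^ (k + 3) * (2 * r)) ^ n *
          ((1 + (2:ℝ) ^ n) * (2:ℝ) ^ (max (α i) 0) *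
            (((k:ℝ) + 5) * (((2:ℝ) ^ (max (α i) 0)) ^ (k + 3) * r ^ (α i)))))) := by
      intro i
      have hdev := dev_int_bound (a := α i) hn0 (hf i) (hfin i).ne hr hx (k + 3)
      have hGb := G_bound n (α i) hr (k + 3)
      have hcast : ((k + 3 : ℕ):ℝ) + 2 = (k:ℝ) + 5 := by push_cast; ring
      rw [hcast] at hGb
      refine hdev.trans ?_
      refine mul_le_mul_of_nonneg_left
        (mul_le_mul_of_nonneg_left (mul_le_mul_of_nonneg_left ?_ (by positivity))
          (by positivity)) (hKnn i)
      exact hGb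
    have hJnn : ∀ i : Fin m, (0:ℝ) ≤
        K i * (V₁ ^ (1 + α i / (n:ℝ)) * (((2:ℝ) ^ (k + 3) * (2 * r)) ^ n *
          ((1 + (2:ℝ) ^ n) * (2:ℝ) ^ (max (α i) 0) *
            (((k:ℝ) + 5) * (((2:ℝ) ^ (max (α i) 0)) ^ (k + 3) * r ^ (α i)))))) := by
      intro i
      have h1 := hKnn i
      have h2 : (0:ℝ) < V₁ ^ (1 + α i / (n:ℝ)) := Real.rpow_pos_of_pos hV₁ _
      have h3 : (0:ℝ) < (2:ℝ) ^ (max (α i) 0) := Real.rpow_pos_of_pos two_pos _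
      have h4 : (0:ℝ) < r ^ (α i) := Real.rpow_pos_of_pos hr _
      positivity
    have halg : r ^ β / (2 ^ k * (8 * r)) ^ pp *
        ∏ i, (K i * (V₁ ^ (1 + α i / (n:ℝ)) * (((2:ℝ) ^ (k + 3) * (2 * r)) ^ n *
          ((1 + (2:ℝ) ^ n) * (2:ℝ) ^ (max (α i) 0) *
            (((k:ℝ) + 5) * (((2:ℝ) ^ (max (α i) 0)) ^ (k + 3) * r ^ (α i)))))))
        = CONST * (∏ i, K i) * r ^ (Ah + γ) * w k := by
      simp only [hCONST, hAh, hAp, hQ, hwdef, hppdef, hK]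
      exact final_algebra n m β γ α V₁ _ hr k
    calc ∫⁻ y in T k, ENNReal.ofReal (r ^ β * (∏ i, |f i (y i) - ballAvg n (f i) x₀ r|) /
          (∑ j, ‖x - y j‖) ^ pp)
        = ∫⁻ y, (T k).indicator (fun y' =>
            ENNReal.ofReal (r ^ β * (∏ i, |f i (y' i) - ballAvg n (f i) x₀ r|) /
              (∑ j, ‖x - y' j‖) ^ pp)) y := (lintegral_indicator hTm _).symm
      _ ≤ ∫⁻ y, (T k).indicator G y := by
          refine lintegral_mono fun y => ?_
          by_cases hy : y ∈ T k
          · simpa [Set.indicator_of_mem hy] using hpoint y hy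
          · simp [Set.indicator_of_notMem hy]
      _ = ∫⁻ y in T k, G y := lintegral_indicator hTm _
      _ ≤ ∫⁻ y in Set.univ.pi fun _ : Fin m => closedBall x (2 ^ (k + 1) * (8 * r)), G y :=
          lintegral_mono_set hTsub
      _ = ENNReal.ofReal (r ^ β / (2 ^ k * (8 * r)) ^ pp) *
          ∫⁻ y in Set.univ.pi fun _ : Fin m => closedBall x (2 ^ (k + 1) * (8 * r)),
            ∏ i, ENNReal.ofReal |f i (y i) - ballAvg n (f i) x₀ r| := by
          simp only [hG]
          exact lintegral_const_mul' _ _ ENNReal.ofReal_ne_top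
      _ = ENNReal.ofReal (r ^ β / (2 ^ k * (8 * r)) ^ pp) *
          ∏ i, ENNReal.ofReal (∫ z in closedBall x (2 ^ (k + 3) * (2 * r)),
            |f i z - ballAvg n (f i) x₀ r|) := by
          rw [hρeq]
          exact congrArg (ENNReal.ofReal (r ^ β / (2 ^ k * (8 * r)) ^ pp) * ·)
            (prod_dev_factor f hf (fun i => ballAvg n (f i) x₀ r) x _)
      _ ≤ ENNReal.ofReal (r ^ β / (2 ^ k * (8 * r)) ^ pp) *
          ∏ i, ENNReal.ofReal (K i * (V₁ ^ (1 + α i / (n:ℝ)) *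
            (((2:ℝ) ^ (k + 3) * (2 * r)) ^ n *
              ((1 + (2:ℝ) ^ n) * (2:ℝ) ^ (max (α i) 0) *
                (((k:ℝ) + 5) * (((2:ℝ) ^ (max (α i) 0)) ^ (k + 3) * r ^ (α i))))))) := by
          refine mul_le_mul_right (Finset.prod_le_prod' fun i _ => ?_) _
          exact ENNReal.ofReal_le_ofReal (hJ i)
      _ = ENNReal.ofReal (r ^ β / (2 ^ k * (8 * r)) ^ pp *
          ∏ i, (K i * (V₁ ^ (1 + α i / (n:ℝ)) * (((2:ℝ) ^ (k + 3) * (2 * r)) ^ n *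
            ((1 + (2:ℝ) ^ n) * (2:ℝ) ^ (max (α i) 0) *
              (((k:ℝ) + 5) * (((2:ℝ) ^ (max (α i) 0)) ^ (k + 3) * r ^ (α i)))))))) := by
          rw [ENNReal.ofReal_mul hcst, ENNReal.ofReal_prod_of_nonneg fun i _ => hJnn i]
      _ = ENNReal.ofReal (CONST * (∏ i, K i) * r ^ (Ah + γ) * w k) := by rw [halg]
  have hnn2 : ∀ k : ℕ, 0 ≤ CONST * (∏ i, K i) * r ^ (Ah + γ) * w k := by
    intro k
    have h1 : (0:ℝ) < r ^ (Ah + γ) := Real.rpow_pos_of_pos hr _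
    have h2 := hwnn k
    positivity
  calc ∫⁻ y in (Set.univ.pi fun _ : Fin m => closedBall x (8 * r))ᶜ,
        ENNReal.ofReal (r ^ β * (∏ i, |f i (y i) - ballAvg n (f i) x₀ r|) /
          (∑ j, ‖x - y j‖) ^ pp)
      ≤ ∫⁻ y in ⋃ k : ℕ, T k,
        ENNReal.ofReal (r ^ β * (∏ i, |f i (y i) - ballAvg n (f i) x₀ r|) /
          (∑ j, ‖x - y j‖) ^ pp) := by
        refine lintegral_mono_set ?_
        simpa only [hT] using cover_lemma hm0 x hr
    _ ≤ ∑' k : ℕ, ∫⁻ y in T k,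
        ENNReal.ofReal (r ^ β * (∏ i, |f i (y i) - ballAvg n (f i) x₀ r|) /
          (∑ j, ‖x - y j‖) ^ pp) := lintegral_iUnion_le _ _
    _ ≤ ∑' k : ℕ, ENNReal.ofReal (CONST * (∏ i, K i) * r ^ (Ah + γ) * w k) :=
        ENNReal.tsum_le_tsum key
    _ = ENNReal.ofReal (∑' k : ℕ, CONST * (∏ i, K i) * r ^ (Ah + γ) * w k) :=
        (ENNReal.ofReal_tsum_of_nonneg hnn2 (hwsum.mul_left _)).symm
    _ = ENNReal.ofReal (CONST * (∏ i, K i) * r ^ (Ah + γ) * W) := by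
        rw [hW, tsum_mul_left]
    _ ≤ ENNReal.ofReal (CONST * W * r ^ (Ah + γ) * ∏ i, K i) :=
        ENNReal.ofReal_le_ofReal (le_of_eq (by ring))
end
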